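/- Let (E,e,T) be a T-universally complete conditional Riesz triple and μ ∈ ba(T)_+. Then: (a) for every f ∈ L^∞(T)_+ and every sequence (s_n) in S_e(T)_+ converging u-uniformly to f for some u ∈ R(T)_+, the sequence (I_μ(s_n)) converges (u·μ(e))-uniformly to ∫ f dμ; and (b) for every f ∈ L^∞(T)_+ there exist u ∈ R(T)_+ and an increasing sequence (s_n) in S_e(T)_+ converging u-uniformly to f. -/

import Mathlib

set_option linter.unusedSectionVars false
set_option linter.unusedVariables false
set_option maxHeartbeats 1000000


open scoped Classical

noncomputable section

namespace RieszPaper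

universe u v w

/-! ### Basic Riesz space notions -/

section BasicDefs

variable {E : Type u} [Lattice E] [AddCommGroup E]

/-- The positive part `x ⊔ 0`. -/
def rpos (x : E) : E := x ⊔ 0

/-- The set of components of `e`, i.e. elements `p` with `p ⊓ (e - p) = 0`. -/
def Comp (e : E) : Set E := {p | p ⊓ (e - p) = 0}

/-- Disjoint complement of a set. -/
def disjC (S : Set E) : Set E := {x | ∀ y ∈ S, |x| ⊓ |y| = 0}

/-- The principal band generated by `f` (as double disjoint complement). -/
def pBand (f : E) : Set E := disjC (disjC {f})

/-- `e` is a weak order unit: `e > 0` and the band generated by `e` is all of `E`. -/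
def IsWeakUnit (e : E) : Prop := 0 < e ∧ ∀ x : E, 0 ≤ x → x ⊓ e = 0 → x = 0

/-- The chain `x ⊓ n•|f|`, whose supremum is the band projection of `x ≥ 0`
onto the band generated by `f`. -/
def projChain (f x : E) : Set E := {y | ∃ n : ℕ, y = x ⊓ n • |f|}

/-- Band projection of a positive element onto the band generated by `f`. -/
def projP (f x : E) : E := if h : ∃ s, IsLUB (projChain f x) s then h.choose else 0

/-- Band projection onto the principal band generated by `f`. -/
def proj (f x : E) : E := projP f (rpos x) - projP f (rpos (-x))

/-- The principal projection property. -/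
def HasPPP (α : Type u) [Lattice α] [AddCommGroup α] : Prop :=
  ∀ f x : α, 0 ≤ x → ∃ s, IsLUB (projChain f x) s

/-- A subset is sequentially order closed. -/
def SeqOrderClosed (D : Set E) : Prop :=
  (∀ (x : ℕ → E) (l : E), (∀ n, x n ∈ D) → Monotone x → IsLUB (Set.range x) l → l ∈ D) ∧
  (∀ (x : ℕ → E) (l : E), (∀ n, x n ∈ D) → Antitone x → IsGLB (Set.range x) l → l ∈ D)

end BasicDefs

/-! ### Charges on components -/

section Charges

variable {E : Type u} [Lattice E] [AddCommGroup E]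
variable {F : Type v} [Lattice F] [AddCommGroup F]

/-- `μ` is an `F`-valued signed charge on the components of `e`. -/
def IsChargeOn (e : E) (μ : E → F) : Prop :=
  μ 0 = 0 ∧ ∀ p q : E, p ∈ Comp e → q ∈ Comp e → p ⊓ q = 0 → μ (p + q) = μ p + μ q

/-- `μ` is order bounded on the components of `e`. -/
def OrdBddOn (e : E) (μ : E → F) : Prop :=
  ∃ g : F, 0 ≤ g ∧ ∀ p ∈ Comp e, |μ p| ≤ g

/-- `ba(C_e, F)`: order bounded signed `F`-valued charges on the components of `e`. -/
def baSet (e : E) : Set (E → F) := {μ | IsChargeOn e μ ∧ OrdBddOn e μ}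

/-- The order on charges: `μ ≤ ν` iff `ν - μ` is positive on components. -/
def baLe (e : E) (μ ν : E → F) : Prop := ∀ p ∈ Comp e, μ p ≤ ν p

/-- `η` is the least upper bound of `S ⊆ ba(C_e,F)` within `ba(C_e,F)`. -/
def IsLUBba (e : E) (S : Set (E → F)) (η : E → F) : Prop :=
  η ∈ baSet e ∧ (∀ μ ∈ S, baLe e μ η) ∧
    ∀ ξ ∈ baSet e, (∀ μ ∈ S, baLe e μ ξ) → baLe e η ξ

/-- `η` is the greatest lower bound of `S ⊆ ba(C_e,F)` within `ba(C_e,F)`. -/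
def IsGLBba (e : E) (S : Set (E → F)) (η : E → F) : Prop :=
  η ∈ baSet e ∧ (∀ μ ∈ S, baLe e η μ) ∧
    ∀ ξ ∈ baSet e, (∀ μ ∈ S, baLe e ξ μ) → baLe e ξ η

end Charges

section ChargesCCL

variable {E : Type u} [Lattice E] [AddCommGroup E]
variable {F : Type v} [ConditionallyCompleteLattice F] [AddCommGroup F]

/-- Pointwise formula for the supremum of two charges. -/
def chSupAt (e : E) (μ ν : E → F) (p : E) : F :=
  sSup {v | ∃ q, q ∈ Comp e ∧ q ≤ p ∧ v = μ q + ν (p - q)}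

/-- Pointwise formula for the infimum of two charges. -/
def chInfAt (e : E) (μ ν : E → F) (p : E) : F :=
  sInf {v | ∃ q, q ∈ Comp e ∧ q ≤ p ∧ v = μ q + ν (p - q)}

/-- The modulus of a charge, via the Riesz–Kantorovich-type formula. -/
def chargeAbs (e : E) (μ : E → F) : E → F :=
  fun p => sSup {v | ∃ q, q ∈ Comp e ∧ q ≤ p ∧ v = μ q - μ (p - q)}

/-- The positive part of a charge. -/
def chargePos (e : E) (μ : E → F) : E → F :=
  fun p => sSup {v | ∃ q, q ∈ Comp e ∧ q ≤ p ∧ v = μ q}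

/-- The negative part of a charge. -/
def chargeNeg (e : E) (μ : E → F) : E → F :=
  fun p => sSup {v | ∃ q, q ∈ Comp e ∧ q ≤ p ∧ v = -(μ q)}

end ChargesCCL

/-! ### Operators -/

section Ops

variable {E : Type u} [Lattice E] [AddCommGroup E] [Module ℝ E]

def PosOn (Lp : Set E) (φ : E → E) : Prop := ∀ f ∈ Lp, 0 ≤ f → 0 ≤ φ f

def AddOn (Lp : Set E) (φ : E → E) : Prop :=
  ∀ f g : E, f ∈ Lp → g ∈ Lp → φ (f + g) = φ f + φ g

def SmulOn (Lp : Set E) (φ : E → E) : Prop :=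
  ∀ (r : ℝ) (f : E), f ∈ Lp → φ (r • f) = r • φ f

/-- `φ` is a regular operator on `Lp`: a difference of two positive linear maps. -/
def RegularOn (Lp : Set E) (φ : E → E) : Prop :=
  ∃ ψ₁ ψ₂ : E → E, AddOn Lp ψ₁ ∧ AddOn Lp ψ₂ ∧ SmulOn Lp ψ₁ ∧ SmulOn Lp ψ₂ ∧
    PosOn Lp ψ₁ ∧ PosOn Lp ψ₂ ∧ ∀ f ∈ Lp, φ f = ψ₁ f - ψ₂ f

/-- Uniform convergence of a sequence with regulator `u`. -/
def UnifConv (u : E) (s : ℕ → E) (f : E) : Prop :=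
  ∃ ε : ℕ → ℝ, Antitone ε ∧ Filter.Tendsto ε Filter.atTop (nhds 0) ∧
    ∀ n, |f - s n| ≤ ε n • u

end Ops

/-! ### Conditional expectation operators -/

section CondExp

variable {E : Type u} [ConditionallyCompleteLattice E] [AddCommGroup E] [Module ℝ E]

/-- `(E, e, T)` is a conditional Riesz triple: `e` is a weak order unit and `T` is a
strictly positive conditional expectation operator with `T e = e` whose range is a
Dedekind complete Riesz subspace. -/
structure IsCondTriple (e : E) (T : E →ₗ[ℝ] E) : Prop where
  weakUnit : IsWeakUnit e
  pos : ∀ x : E, 0 ≤ x → 0 ≤ T x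
  strictPos : ∀ x : E, 0 < x → 0 < T x
  ordCont : ∀ (A : Set E) (s : E), A.Nonempty → DirectedOn (· ≤ ·) A →
    IsLUB A s → IsLUB (T '' A) (T s)
  idem : ∀ x : E, T (T x) = T x
  unitFix : T e = e
  rangeSupClosed : ∀ x y : E, x ∈ Set.range T → y ∈ Set.range T → x ⊔ y ∈ Set.range T
  rangeDedekind : ∀ A : Set E, A ⊆ Set.range T → A.Nonempty → BddAbove A →
    sSup A ∈ Set.range T

end CondExp

/-! ### Universal completion and T-universal completeness -/

section Univ

variable {E : Type u} {G : Type v}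
variable [ConditionallyCompleteLattice E] [AddCommGroup E] [Module ℝ E]
variable [ConditionallyCompleteLattice G] [AddCommGroup G] [Module ℝ G]

/-- `j : E → G` realizes `G` as a universal completion of `E`. -/
structure IsUnivCompletion (j : E →ₗ[ℝ] G) : Prop where
  bipos : ∀ x : E, 0 ≤ j x ↔ 0 ≤ x
  latHom : ∀ x y : E, j (x ⊔ y) = j x ⊔ j y
  dense : ∀ z : G, 0 < z → ∃ x : E, 0 < j x ∧ j x ≤ z
  univComplete : ∀ S : Set G, (∀ x ∈ S, 0 ≤ x) →
    S.Pairwise (fun a b => a ⊓ b = 0) → BddAbove S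

/-- `E` is `T`-universally complete (relative to the universal completion `j : E → G`):
every nonempty upwards directed subset `A ⊆ E` such that `j[T[A]]` is bounded above in
`G` has a supremum in `E`. -/
def TUnivComplete (T : E →ₗ[ℝ] E) (j : E →ₗ[ℝ] G) : Prop :=
  ∀ A : Set E, A.Nonempty → DirectedOn (· ≤ ·) A →
    BddAbove (⇑j '' (⇑T '' A)) → BddAbove A

end Univ

/-- `mul` is a commutative `f`-algebra multiplication with unit `u`. -/
structure IsFAlgebraMul {G : Type v} [Lattice G] [AddCommGroup G] [Module ℝ G]
    (u : G) (mul : G → G → G) : Prop where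
  comm : ∀ x y, mul x y = mul y x
  assoc : ∀ x y z, mul (mul x y) z = mul x (mul y z)
  add_left : ∀ x y z, mul (x + y) z = mul x z + mul y z
  smul_left : ∀ (r : ℝ) (x y), mul (r • x) y = r • mul x y
  one_mul : ∀ x, mul u x = x
  mul_nonneg : ∀ x y, 0 ≤ x → 0 ≤ y → 0 ≤ mul x y
  disj : ∀ x y z, x ⊓ y = 0 → 0 ≤ z → mul x z ⊓ y = 0

/-! ### Bundled T-universally complete conditional Riesz triples -/

/-- A `T`-universally complete conditional Riesz triple `(E, e, T)`, together with a
universal completion `j : E → G` carrying its `f`-algebra multiplication (with unit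
`j e`).  Since `E = L¹(T)` is an `R(T)`-module, products of elements of `L^∞(T)` with
elements of `E` again lie in `E` (`mulClosed`). -/
structure CRT (E : Type u) (G : Type v)
    [ConditionallyCompleteLattice E] [AddCommGroup E] [Module ℝ E]
    [CovariantClass E E (· + ·) (· ≤ ·)] [PosSMulMono ℝ E]
    [ConditionallyCompleteLattice G] [AddCommGroup G] [Module ℝ G]
    [CovariantClass G G (· + ·) (· ≤ ·)] [PosSMulMono ℝ G] where
  e : E
  T : E →ₗ[ℝ] E
  j : E →ₗ[ℝ] G
  mul : G → G → G
  triple : IsCondTriple e T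
  compl : IsUnivCompletion j
  falg : IsFAlgebraMul (j e) mul
  tuc : TUnivComplete T j
  mulClosed : ∀ f g : E, (∃ h : E, h ∈ Set.range T ∧ 0 ≤ h ∧ |f| ≤ h) →
    mul (j f) (j g) ∈ Set.range ⇑j

namespace CRT

variable {E : Type u} {G : Type v}
variable [ConditionallyCompleteLattice E] [AddCommGroup E] [Module ℝ E]
  [CovariantClass E E (· + ·) (· ≤ ·)] [PosSMulMono ℝ E]
variable [ConditionallyCompleteLattice G] [AddCommGroup G] [Module ℝ G]
  [CovariantClass G G (· + ·) (· ≤ ·)] [PosSMulMono ℝ G]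
variable (C : CRT E G)

/-- The range `R(T)`. -/
def R : Set E := Set.range ⇑C.T

/-- The product `g · f` of two elements of `E = L¹(T)`, computed in the universal
completion (meaningful whenever the product lies again in `E`, e.g. for
`g ∈ R(T)` or `g ∈ L^∞(T)`). -/
def sm (g f : E) : E := @Function.invFun E G ⟨0⟩ (⇑C.j) (C.mul (C.j g) (C.j f))

/-- `L^∞(T) = {f : |f| ≤ g for some g ∈ R(T)₊}`. -/
def Linf : Set E := {f | ∃ h ∈ C.R, 0 ≤ h ∧ |f| ≤ h}

/-- The `R(T)`-valued norm `‖f‖_{T,1} = T |f|`. -/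
def nrm1 (f : E) : E := C.T |f|

/-- The `R(T)`-valued norm `‖f‖_{T,∞} = inf {α ∈ R(T)₊ : |f| ≤ α}`. -/
def nrmInf (f : E) : E := sInf {a | a ∈ C.R ∧ 0 ≤ a ∧ |f| ≤ a}

/-- Order bounded signed `R(T)`-valued charges on the components of `u`. -/
def baR (u : E) : Set (E → E) :=
  {μ | IsChargeOn u μ ∧ (∀ p ∈ Comp u, μ p ∈ C.R) ∧
     ∃ g ∈ C.R, 0 ≤ g ∧ ∀ p ∈ Comp u, |μ p| ≤ g}

/-- `ba(T)`: the `T`-absolutely continuous charges in `ba(C_e, R(T))`. -/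
def baT : Set (E → E) :=
  {μ | μ ∈ C.baR C.e ∧ ∀ p ∈ Comp C.e, μ p ∈ pBand (C.T p)}

/-- `x = ∑ αᵢ pᵢ` is a standard representation of the `e`-step function `x` with
`R(T)`-coefficients. -/
def IsStdRep (x : E) (n : ℕ) (α p : Fin n → E) : Prop :=
  (∀ i, α i ∈ C.R) ∧ (∀ i, p i ∈ Comp C.e) ∧
  (∀ i j, i ≠ j → p i ⊓ p j = 0) ∧ (∑ i, p i) = C.e ∧
  x = ∑ i, C.sm (α i) (p i)

/-- `S_e(T)`: the `e`-step functions with `R(T)`-coefficients. -/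
def Steps : Set E := {x | ∃ (n : ℕ) (α p : Fin n → E), C.IsStdRep x n α p}

/-- The integral `I_μ` of a step function: `I_μ (∑ αᵢ pᵢ) = ∑ αᵢ μ(pᵢ)`. -/
def Imu (μ : E → E) (x : E) : E :=
  @Classical.epsilon E ⟨0⟩ fun v =>
    ∃ (n : ℕ) (α p : Fin n → E), C.IsStdRep x n α p ∧ v = ∑ i, C.sm (α i) (μ (p i))

/-- The integral of a positive element of `L^∞(T)` with respect to a positive charge. -/
def intPos (μ : E → E) (f : E) : E :=
  sSup {v | ∃ g ∈ C.Steps, 0 ≤ g ∧ g ≤ f ∧ v = C.Imu μ g}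

/-- The integral `∫ f dμ = ∫ f⁺ dμ⁺ − ∫ f⁻ dμ⁺ − ∫ f⁺ dμ⁻ + ∫ f⁻ dμ⁻`. -/
def integral (μ : E → E) (f : E) : E :=
  C.intPos (chargePos C.e μ) (rpos f) - C.intPos (chargePos C.e μ) (rpos (-f))
    - C.intPos (chargeNeg C.e μ) (rpos f) + C.intPos (chargeNeg C.e μ) (rpos (-f))

/-- Membership in `L^r(Lp, R(T))`: regular linear operators with values in `R(T)`. -/
structure MemLr (Lp : Set E) (φ : E → E) : Prop where
  add : AddOn Lp φ
  smul : SmulOn Lp φ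
  mem : ∀ f ∈ Lp, φ f ∈ C.R
  regular : RegularOn Lp φ

/-- Membership in the `T`-strong dual of `(Lp, nrm)`: `R(T)`-linear, regular,
`nrm`-bounded maps into `R(T)`. -/
structure MemDual (Lp : Set E) (nrm : E → E) (φ : E → E) : Prop where
  add : AddOn Lp φ
  smul : SmulOn Lp φ
  modHom : ∀ g f : E, g ∈ C.R → f ∈ Lp → φ (C.sm g f) = C.sm g (φ f)
  mem : ∀ f ∈ Lp, φ f ∈ C.R
  regular : RegularOn Lp φ
  bdd : ∃ k ∈ C.R, 0 ≤ k ∧ ∀ f ∈ Lp, |φ f| ≤ C.sm k (nrm f)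

/-- The `R(T)`-valued norm on the `T`-strong dual. -/
def dualNorm (Lp : Set E) (nrm : E → E) (φ : E → E) : E :=
  sInf {g | g ∈ C.R ∧ 0 ≤ g ∧ ∀ f ∈ Lp, |φ f| ≤ C.sm g (nrm f)}

/-- `|φ| ≤ |ψ|` in `L^r(Lp, R(T))`, via the Riesz–Kantorovich formula. -/
def OpAbsLe (Lp : Set E) (φ ψ : E → E) : Prop :=
  ∀ f ∈ Lp, 0 ≤ f → ∀ g ∈ Lp, |g| ≤ f →
    |φ g| ≤ sSup {v | ∃ h, h ∈ Lp ∧ |h| ≤ f ∧ v = |ψ h|}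

/-- The canonical partial inverse of `h` in `R(T)`: the element `g` of the band
generated by `|h|` with `h g = P_{|h|} e`. -/
def pinv (h : E) : E :=
  @Classical.epsilon E ⟨0⟩ fun g =>
    g ∈ C.R ∧ g ∈ pBand (|h|) ∧ C.sm h g = proj (|h|) C.e

end CRT

/-! ### Bundled Dedekind complete Riesz spaces, for existential statements -/

structure BRiesz : Type (u + 1) where
  carrier : Type u
  [ccl : ConditionallyCompleteLattice carrier]
  [grp : AddCommGroup carrier]
  [mod : Module ℝ carrier]
  [cov : CovariantClass carrier carrier (· + ·) (· ≤ ·)]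
  [psm : PosSMulMono ℝ carrier]

attribute [instance] BRiesz.ccl BRiesz.grp BRiesz.mod BRiesz.cov BRiesz.psm

/-- `(F, ẽ, T̃)` together with `i : E → F` is a `T`-universal completion of `(E, e, T)`. -/
structure IsTUnivCompletion
    {E : Type u} [ConditionallyCompleteLattice E] [AddCommGroup E] [Module ℝ E]
    {F : Type v} [ConditionallyCompleteLattice F] [AddCommGroup F] [Module ℝ F]
    (e : E) (T : E →ₗ[ℝ] E) (e' : F) (T' : F →ₗ[ℝ] F) (i : E →ₗ[ℝ] F) : Prop where
  triple : IsCondTriple e' T'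
  tuniv : ∃ (U : BRiesz.{v}) (j : F →ₗ[ℝ] U.carrier),
    IsUnivCompletion j ∧ TUnivComplete T' j
  bipos : ∀ x : E, 0 ≤ i x ↔ 0 ≤ x
  latHom : ∀ x y : E, i (x ⊔ y) = i x ⊔ i y
  dense : ∀ z : F, 0 < z → ∃ x : E, 0 < i x ∧ i x ≤ z
  unit : i e = e'
  comm : ∀ x : E, T' (i x) = i (T x)


/-! ### Powers via functional calculus, for the spaces `L^p(T)` -/

/-- A `T`-universally complete conditional Riesz triple together with the power
functions `x ↦ x^p` (`x ≥ 0`, `p > 0`) of the functional calculus on the universal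
completion. -/
structure CRTP (E : Type u) (G : Type v)
    [ConditionallyCompleteLattice E] [AddCommGroup E] [Module ℝ E]
    [CovariantClass E E (· + ·) (· ≤ ·)] [PosSMulMono ℝ E]
    [ConditionallyCompleteLattice G] [AddCommGroup G] [Module ℝ G]
    [CovariantClass G G (· + ·) (· ≤ ·)] [PosSMulMono ℝ G]
    extends CRT E G where
  epow : G → ℝ → G
  epow_one : ∀ x : G, 0 ≤ x → epow x 1 = x
  epow_nonneg : ∀ (x : G) (p : ℝ), 0 ≤ x → 0 < p → 0 ≤ epow x p
  epow_mono : ∀ (x y : G) (p : ℝ), 0 ≤ x → x ≤ y → 0 < p → epow x p ≤ epow y p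
  epow_unit : ∀ p : ℝ, 0 < p → epow (toCRT.j toCRT.e) p = toCRT.j toCRT.e
  epow_exp_mul : ∀ (x : G) (p q : ℝ), 0 ≤ x → 0 < p → 0 < q →
    epow (epow x p) q = epow x (p * q)
  epow_mul : ∀ (x y : G) (p : ℝ), 0 ≤ x → 0 ≤ y → 0 < p →
    epow (toCRT.mul x y) p = toCRT.mul (epow x p) (epow y p)
  epow_succ : ∀ (x : G) (n : ℕ), 0 ≤ x → 0 < n →
    epow x ((n : ℝ) + 1) = toCRT.mul (epow x (n : ℝ)) x
  epow_sup : ∀ (x y : G) (p : ℝ), 0 ≤ x → 0 ≤ y → 0 < p →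
    epow (x ⊔ y) p = epow x p ⊔ epow y p
  epow_rangeT : ∀ (x : E) (p : ℝ), 0 ≤ x → 0 < p → x ∈ Set.range ⇑toCRT.T →
    epow (toCRT.j x) p ∈ ⇑toCRT.j '' Set.range ⇑toCRT.T

namespace CRTP

variable {E : Type u} {G : Type v}
variable [ConditionallyCompleteLattice E] [AddCommGroup E] [Module ℝ E]
  [CovariantClass E E (· + ·) (· ≤ ·)] [PosSMulMono ℝ E]
variable [ConditionallyCompleteLattice G] [AddCommGroup G] [Module ℝ G]
  [CovariantClass G G (· + ·) (· ≤ ·)] [PosSMulMono ℝ G]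
variable (C : CRTP E G)

/-- the `p`-th power of `x ∈ E`, computed in the universal completion. -/
def powE (x : E) (p : ℝ) : E :=
  @Function.invFun E G ⟨0⟩ (⇑C.toCRT.j) (C.epow (C.toCRT.j x) p)

/-- `L^p(T) = {f ∈ L¹(T) : |f|^p ∈ L¹(T)}` for `p ∈ [1, ∞)`. -/
def LpSet (p : ℝ) : Set E := {f | C.epow (C.toCRT.j |f|) p ∈ Set.range ⇑C.toCRT.j}

/-- The `R(T)`-valued norm `‖f‖_{T,p} = (T |f|^p)^{1/p}`. -/
def nrmP (p : ℝ) (f : E) : E := C.powE (C.toCRT.T (C.powE |f| p)) (1 / p)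

end CRTP

/-! ### Auxiliary lattice-group lemmas -/

section AuxLG
variable {α : Type*} [Lattice α] [AddCommGroup α] [CovariantClass α α (· + ·) (· ≤ ·)]

lemma aux_inf_sup_left (a b c : α) : a ⊓ (b ⊔ c) = (a ⊓ b) ⊔ (a ⊓ c) := by
  letI := AddCommGroup.toDistribLattice α
  exact inf_sup_left a b c

lemma aux_inf_sup_right (a b c : α) : (a ⊔ b) ⊓ c = (a ⊓ c) ⊔ (b ⊓ c) := by
  letI := AddCommGroup.toDistribLattice α
  exact inf_sup_right a b c

lemma aux_nonneg_left {a b : α} (h : a ⊓ b = 0) : 0 ≤ a := by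
  rw [← h]; exact inf_le_left

lemma aux_nonneg_right {a b : α} (h : a ⊓ b = 0) : 0 ≤ b := by
  rw [← h]; exact inf_le_right

lemma aux_add_eq_sup {a b : α} (h : a ⊓ b = 0) : a + b = a ⊔ b := by
  rw [← inf_add_sup, h, zero_add]

lemma aux_add_inf_add_le (a b c d : α) : a ⊓ c + b ⊓ d ≤ (a + b) ⊓ (c + d) :=
  le_inf (add_le_add inf_le_left inf_le_left) (add_le_add inf_le_right inf_le_right)

lemma aux_inf_add_le {a b c : α} (ha : 0 ≤ a) (hb : 0 ≤ b) (hc : 0 ≤ c) :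
    a ⊓ (b + c) ≤ a ⊓ b + a ⊓ c := by
  have h1 : a ⊓ b + a ⊓ c = ((a + a) ⊓ (a + c)) ⊓ ((b + a) ⊓ (b + c)) := by
    rw [inf_add a b (a ⊓ c), add_inf a c a, add_inf a c b]
  rw [h1]
  refine le_inf (le_inf ?_ ?_) (le_inf ?_ ?_)
  · exact inf_le_left.trans (le_add_of_nonneg_right ha)
  · exact inf_le_left.trans (le_add_of_nonneg_right hc)
  · exact inf_le_left.trans (le_add_of_nonneg_left hb)
  · exact inf_le_right

lemma aux_inf_nsmul_le {a b : α} (ha : 0 ≤ a) (hb : 0 ≤ b) (n : ℕ) :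
    a ⊓ (n • b) ≤ n • (a ⊓ b) := by
  induction n with
  | zero => simp [inf_eq_right.mpr ha]
  | succ n ih =>
      rw [succ_nsmul, succ_nsmul]
      calc a ⊓ (n • b + b) ≤ a ⊓ (n • b) + a ⊓ b :=
            aux_inf_add_le ha (nsmul_nonneg hb n) hb
        _ ≤ n • (a ⊓ b) + a ⊓ b := add_le_add_left ih _

lemma aux_posPart_of_disj {a b : α} (h : a ⊓ b = 0) : (a - b) ⊔ 0 = a := by
  have hs : a ⊔ b = a + b := (aux_add_eq_sup h).symm
  have h2 := add_sup a b (-b)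
  rw [hs] at h2
  calc (a - b) ⊔ 0 = (-b + a) ⊔ (-b + b) := by rw [neg_add_cancel, sub_eq_neg_add]
    _ = -b + (a + b) := h2.symm
    _ = a := by abel

lemma aux_abs_sub_of_disj {a b : α} (h : a ⊓ b = 0) : |a - b| = a + b := by
  have h1 : (a - b)⁺ = a := aux_posPart_of_disj h
  have h2 : (a - b)⁻ = b := by
    show (-(a - b)) ⊔ 0 = b
    rw [neg_sub]
    exact aux_posPart_of_disj (by rwa [inf_comm])
  rw [← posPart_add_negPart (a - b), h1, h2]

lemma aux_negPart_le_abs (a : α) : a⁻ ≤ |a| := by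
  have : a⁻ ≤ a⁺ + a⁻ := le_add_of_nonneg_left (posPart_nonneg a)
  rwa [posPart_add_negPart] at this

lemma aux_posPart_le_abs (a : α) : a⁺ ≤ |a| := by
  have : a⁺ ≤ a⁺ + a⁻ := le_add_of_nonneg_right (negPart_nonneg a)
  rwa [posPart_add_negPart] at this

lemma aux_posPart_add_of_disj {a b : α} (h : |a| ⊓ |b| = 0) :
    (a + b) ⊔ 0 = a ⊔ 0 + b ⊔ 0 := by
  have key : (a⁺ + b⁺) ⊓ (a⁻ + b⁻) = 0 := by
    refine le_antisymm ?_ (le_inf (add_nonneg (posPart_nonneg a) (posPart_nonneg b))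
      (add_nonneg (negPart_nonneg a) (negPart_nonneg b)))
    have h0 : 0 ≤ a⁺ + b⁺ := add_nonneg (posPart_nonneg a) (posPart_nonneg b)
    calc (a⁺ + b⁺) ⊓ (a⁻ + b⁻) ≤ (a⁺ + b⁺) ⊓ a⁻ + (a⁺ + b⁺) ⊓ b⁻ :=
          aux_inf_add_le h0 (negPart_nonneg a) (negPart_nonneg b)
      _ ≤ (a⁻ ⊓ a⁺ + a⁻ ⊓ b⁺) + (b⁻ ⊓ a⁺ + b⁻ ⊓ b⁺) := by
          refine add_le_add ?_ ?_
          · rw [inf_comm]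
            exact aux_inf_add_le (negPart_nonneg a) (posPart_nonneg a) (posPart_nonneg b)
          · rw [inf_comm]
            exact aux_inf_add_le (negPart_nonneg b) (posPart_nonneg a) (posPart_nonneg b)
      _ ≤ 0 := by
          have e1 : a⁻ ⊓ a⁺ = 0 := by rw [inf_comm]; exact posPart_inf_negPart_eq_zero a
          have e2 : b⁻ ⊓ b⁺ = 0 := by rw [inf_comm]; exact posPart_inf_negPart_eq_zero b
          have e3 : a⁻ ⊓ b⁺ ≤ 0 := by
            calc a⁻ ⊓ b⁺ ≤ |a| ⊓ |b| := inf_le_inf (aux_negPart_le_abs a) (aux_posPart_le_abs b)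
              _ = 0 := h
          have e4 : b⁻ ⊓ a⁺ ≤ 0 := by
            calc b⁻ ⊓ a⁺ ≤ |b| ⊓ |a| := inf_le_inf (aux_negPart_le_abs b) (aux_posPart_le_abs a)
              _ = 0 := by rw [inf_comm]; exact h
          calc (a⁻ ⊓ a⁺ + a⁻ ⊓ b⁺) + (b⁻ ⊓ a⁺ + b⁻ ⊓ b⁺)
              ≤ (0 + 0) + (0 + 0) := by
                refine add_le_add (add_le_add (le_of_eq e1) e3) (add_le_add e4 (le_of_eq e2))
            _ = 0 := by simp
  have hab : a + b = (a⁺ + b⁺) - (a⁻ + b⁻) := by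
    have := posPart_sub_negPart a
    have := posPart_sub_negPart b
    calc a + b = (a⁺ - a⁻) + (b⁺ - b⁻) := by rw [posPart_sub_negPart, posPart_sub_negPart]
      _ = (a⁺ + b⁺) - (a⁻ + b⁻) := by abel
  rw [hab, aux_posPart_of_disj key]
  rfl

lemma aux_sum_nonneg {ι : Type*} (s : Finset ι) (t : ι → α)
    (ht : ∀ i ∈ s, 0 ≤ t i) : 0 ≤ ∑ i ∈ s, t i := by
  classical
  induction s using Finset.induction with
  | empty => simp
  | @insert i s hns ih =>
      rw [Finset.sum_insert hns]
      exact add_nonneg (ht i (Finset.mem_insert_self i s))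
        (ih fun k hk => ht k (Finset.mem_insert_of_mem hk))

lemma aux_sum_le_sum {ι : Type*} (s : Finset ι) (f g : ι → α)
    (h : ∀ i ∈ s, f i ≤ g i) : ∑ i ∈ s, f i ≤ ∑ i ∈ s, g i := by
  classical
  induction s using Finset.induction with
  | empty => simp
  | @insert i s hns ih =>
      rw [Finset.sum_insert hns, Finset.sum_insert hns]
      exact add_le_add (h i (Finset.mem_insert_self i s))
        (ih fun k hk => h k (Finset.mem_insert_of_mem hk))

lemma aux_abs_sum_le {ι : Type*} (s : Finset ι) (t : ι → α) :
    |∑ i ∈ s, t i| ≤ ∑ i ∈ s, |t i| := by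
  classical
  induction s using Finset.induction with
  | empty => simp
  | @insert i s hns ih =>
      rw [Finset.sum_insert hns, Finset.sum_insert hns]
      exact (abs_add_le (t i) (∑ k ∈ s, t k)).trans (add_le_add_right ih _)

lemma aux_inf_sum_le {ι : Type*} {a : α} (ha : 0 ≤ a) (s : Finset ι) (t : ι → α)
    (ht : ∀ i ∈ s, 0 ≤ t i) : a ⊓ (∑ i ∈ s, t i) ≤ ∑ i ∈ s, a ⊓ t i := by
  classical
  induction s using Finset.induction with
  | empty => simp [inf_eq_right.mpr ha]
  | @insert i s hns ih =>
      rw [Finset.sum_insert hns, Finset.sum_insert hns]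
      calc a ⊓ (t i + ∑ k ∈ s, t k) ≤ a ⊓ t i + a ⊓ ∑ k ∈ s, t k :=
            aux_inf_add_le ha (ht i (Finset.mem_insert_self i s))
              (aux_sum_nonneg s t fun k hk => ht k (Finset.mem_insert_of_mem hk))
        _ ≤ a ⊓ t i + ∑ k ∈ s, a ⊓ t k :=
            add_le_add_right (ih fun k hk => ht k (Finset.mem_insert_of_mem hk)) _

lemma aux_posPart_sum_of_disj {ι : Type*} (s : Finset ι) (t : ι → α)
    (h : ∀ i ∈ s, ∀ k ∈ s, i ≠ k → |t i| ⊓ |t k| = 0) :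
    (∑ i ∈ s, t i) ⊔ 0 = ∑ i ∈ s, (t i ⊔ 0) := by
  classical
  induction s using Finset.induction with
  | empty => simp
  | @insert i s hns ih =>
      rw [Finset.sum_insert hns, Finset.sum_insert hns]
      have hd : |t i| ⊓ |∑ k ∈ s, t k| = 0 := by
        refine le_antisymm ?_ (le_inf (abs_nonneg _) (abs_nonneg _))
        calc |t i| ⊓ |∑ k ∈ s, t k| ≤ |t i| ⊓ ∑ k ∈ s, |t k| :=
              inf_le_inf_left _ (aux_abs_sum_le s t)
          _ ≤ ∑ k ∈ s, |t i| ⊓ |t k| :=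
              aux_inf_sum_le (abs_nonneg _) s _ (fun k _ => abs_nonneg _)
          _ ≤ 0 := by
              refine le_of_eq (Finset.sum_eq_zero fun k hk => ?_)
              exact h i (Finset.mem_insert_self i s) k (Finset.mem_insert_of_mem hk)
                (fun he => hns (he ▸ hk))
      rw [aux_posPart_add_of_disj hd,
        ih (fun a ha b hb hab => h a (Finset.mem_insert_of_mem ha) b (Finset.mem_insert_of_mem hb) hab)]

end AuxLG

section AuxCCL
variable {α : Type*} [ConditionallyCompleteLattice α] [AddCommGroup α]
  [CovariantClass α α (· + ·) (· ≤ ·)]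

lemma aux_le_zero_of_nsmul_le {a b : α} (h : ∀ n : ℕ, n • a ≤ b) : a ≤ 0 := by
  set S := Set.range (fun n : ℕ => n • a) with hS
  have hne : S.Nonempty := ⟨0 • a, ⟨0, rfl⟩⟩
  have hbdd : BddAbove S := ⟨b, by rintro x ⟨n, rfl⟩; exact h n⟩
  have hl := isLUB_csSup hne hbdd
  have hub : ∀ x ∈ S, x ≤ sSup S - a := by
    rintro x ⟨n, rfl⟩
    have h1 : (n + 1) • a ≤ sSup S := hl.1 ⟨n + 1, rfl⟩
    rw [succ_nsmul] at h1
    exact le_sub_iff_add_le.mpr h1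
  have h2 : sSup S ≤ sSup S - a := hl.2 hub
  have h3 : sSup S + a ≤ sSup S := le_sub_iff_add_le.mp h2
  exact (add_le_iff_nonpos_right _).mp h3

lemma aux_isLUB_inf {A : Set α} {s : α} (h : IsLUB A s) (x : α) :
    IsLUB ((fun y => x ⊓ y) '' A) (x ⊓ s) := by
  constructor
  · rintro _ ⟨y, hy, rfl⟩
    exact inf_le_inf_left x (h.1 hy)
  · intro t ht
    have key : ∀ y ∈ A, y ≤ t + (x ⊔ s) - x := by
      intro y hy
      have h1 : x ⊓ y + (x ⊔ y) = x + y := inf_add_sup x y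
      have h2 : x ⊓ y ≤ t := ht ⟨y, hy, rfl⟩
      have h3 : x ⊔ y ≤ x ⊔ s := sup_le_sup_left (h.1 hy) x
      calc y = x ⊓ y + (x ⊔ y) - x := by rw [h1]; abel
        _ ≤ t + (x ⊔ s) - x := sub_le_sub_right (add_le_add h2 h3) x
    have h4 : s ≤ t + (x ⊔ s) - x := h.2 key
    have h5 : x ⊓ s + (x ⊔ s) = x + s := inf_add_sup x s
    calc x ⊓ s = x + s - (x ⊔ s) := by rw [← h5]; abel
      _ ≤ x + (t + (x ⊔ s) - x) - (x ⊔ s) := sub_le_sub_right (add_le_add_right h4 x) _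
      _ = t := by abel

lemma aux_inf_eq_zero_of_isLUB {A : Set α} {s x : α} (h : IsLUB A s) (hne : A.Nonempty)
    (hz : ∀ y ∈ A, x ⊓ y = 0) : x ⊓ s = 0 := by
  have h1 := aux_isLUB_inf h x
  have himg : (fun y => x ⊓ y) '' A = {0} := by
    apply Set.eq_singleton_iff_nonempty_unique_mem.mpr
    refine ⟨⟨x ⊓ hne.choose, ⟨hne.choose, hne.choose_spec, rfl⟩⟩, ?_⟩
    rintro _ ⟨y, hy, rfl⟩
    exact hz y hy
  rw [himg] at h1
  exact h1.unique isLUB_singleton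

end AuxCCL

section AuxComp
variable {α : Type*} [Lattice α] [AddCommGroup α] [CovariantClass α α (· + ·) (· ≤ ·)]
variable {e : α}

lemma comp_nonneg {p : α} (hp : p ∈ Comp e) : 0 ≤ p := aux_nonneg_left hp

lemma comp_le {p : α} (hp : p ∈ Comp e) : p ≤ e :=
  sub_nonneg.mp (aux_nonneg_right hp)

lemma comp_compl {p : α} (hp : p ∈ Comp e) : e - p ∈ Comp e := by
  show (e - p) ⊓ (e - (e - p)) = 0
  rw [sub_sub_cancel, inf_comm]
  exact hp

lemma comp_e (he : 0 ≤ e) : e ∈ Comp e := by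
  show e ⊓ (e - e) = 0
  rw [sub_self, inf_eq_right.mpr he]

lemma comp_zero (he : 0 ≤ e) : (0 : α) ∈ Comp e := by
  show (0 : α) ⊓ (e - 0) = 0
  rw [sub_zero, inf_comm, inf_eq_right.mpr he]

lemma comp_inf {p q : α} (hp : p ∈ Comp e) (hq : q ∈ Comp e) : p ⊓ q ∈ Comp e := by
  show (p ⊓ q) ⊓ (e - p ⊓ q) = 0
  have h1 : e - p ⊓ q = (e - p) ⊔ (e - q) := by
    rw [sub_eq_add_neg, neg_inf, add_sup, ← sub_eq_add_neg, ← sub_eq_add_neg]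
  rw [h1, aux_inf_sup_left]
  refine le_antisymm (sup_le ?_ ?_) (le_sup_left.trans' ?_)
  · exact le_of_le_of_eq (inf_le_inf_right _ inf_le_left) hp
  · exact le_of_le_of_eq (inf_le_inf_right _ inf_le_right) hq
  · exact le_inf (le_inf (comp_nonneg hp) (comp_nonneg hq)) (aux_nonneg_right hp)

lemma comp_add {p q : α} (hp : p ∈ Comp e) (hq : q ∈ Comp e) (hd : p ⊓ q = 0) :
    p + q ∈ Comp e := by
  show (p + q) ⊓ (e - (p + q)) = 0
  rw [aux_add_eq_sup hd]
  have h1 : e - p ⊔ q = (e - p) ⊓ (e - q) := by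
    rw [sub_eq_add_neg, neg_sup, add_inf, ← sub_eq_add_neg, ← sub_eq_add_neg]
  refine le_antisymm ?_ (le_inf ((comp_nonneg hp).trans le_sup_left)
    (by rw [h1]; exact le_inf (aux_nonneg_right hp) (aux_nonneg_right hq)))
  rw [h1, aux_inf_sup_right]
  exact sup_le (le_of_le_of_eq (inf_le_inf_left _ inf_le_left) hp)
    (le_of_le_of_eq (inf_le_inf_left _ inf_le_right) hq)

lemma comp_sub {p q : α} (hp : p ∈ Comp e) (hq : q ∈ Comp e) (hle : q ≤ p) :
    p - q ∈ Comp e := by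
  show (p - q) ⊓ (e - (p - q)) = 0
  have h1 : e - (p - q) = (e - p) + q := by abel
  rw [h1]
  refine le_antisymm ?_ (le_inf (sub_nonneg.mpr hle)
    (add_nonneg (aux_nonneg_right hp) (comp_nonneg hq)))
  calc (p - q) ⊓ ((e - p) + q) ≤ (p - q) ⊓ (e - p) + (p - q) ⊓ q :=
        aux_inf_add_le (sub_nonneg.mpr hle) (aux_nonneg_right hp) (comp_nonneg hq)
    _ ≤ p ⊓ (e - p) + (e - q) ⊓ q := by
        refine add_le_add (inf_le_inf_right _ ?_) (inf_le_inf_right _ ?_)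
        · exact sub_le_self p (comp_nonneg hq)
        · exact sub_le_sub_right (comp_le hp) q
    _ = 0 := by rw [hp, inf_comm, hq, add_zero]

lemma comp_sub_disj {p q : α} (hp : p ∈ Comp e) (hq : q ∈ Comp e) (hle : q ≤ p) :
    (p - q) ⊓ q = 0 := by
  refine le_antisymm ?_ (le_inf (sub_nonneg.mpr hle) (comp_nonneg hq))
  calc (p - q) ⊓ q ≤ (e - q) ⊓ q := inf_le_inf_right q (sub_le_sub_right (comp_le hp) q)
    _ = 0 := by rw [inf_comm]; exact hq

lemma aux_inf_sum_zero {ι : Type*} {x : α} (hx0 : 0 ≤ x) (s : Finset ι) (p : ι → α)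
    (hp : ∀ i ∈ s, 0 ≤ p i) (hx : ∀ i ∈ s, x ⊓ p i = 0) : x ⊓ ∑ i ∈ s, p i = 0 := by
  refine le_antisymm ?_ (le_inf hx0 (aux_sum_nonneg s p hp))
  calc x ⊓ ∑ i ∈ s, p i ≤ ∑ i ∈ s, x ⊓ p i := aux_inf_sum_le hx0 s p hp
    _ = 0 := Finset.sum_eq_zero hx

lemma comp_sum {ι : Type*} (he : 0 ≤ e) (s : Finset ι) (p : ι → α)
    (hcomp : ∀ i ∈ s, p i ∈ Comp e)
    (hd : ∀ i ∈ s, ∀ k ∈ s, i ≠ k → p i ⊓ p k = 0) : ∑ i ∈ s, p i ∈ Comp e := by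
  classical
  induction s using Finset.induction with
  | empty => simpa using comp_zero he
  | @insert i s hns ih =>
      rw [Finset.sum_insert hns]
      refine comp_add (hcomp i (Finset.mem_insert_self i s))
        (ih (fun k hk => hcomp k (Finset.mem_insert_of_mem hk))
          (fun a ha b hb hab => hd a (Finset.mem_insert_of_mem ha) b (Finset.mem_insert_of_mem hb) hab)) ?_
      exact aux_inf_sum_zero (comp_nonneg (hcomp i (Finset.mem_insert_self i s))) s p
        (fun k hk => comp_nonneg (hcomp k (Finset.mem_insert_of_mem hk)))
        (fun k hk => hd i (Finset.mem_insert_self i s) k (Finset.mem_insert_of_mem hk)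
          (fun he' => hns (he' ▸ hk)))

lemma inf_sum_of_disj {ι : Type*} {x : α} (hx0 : 0 ≤ x) (s : Finset ι) (p : ι → α)
    (hcomp : ∀ i ∈ s, 0 ≤ p i)
    (hd : ∀ i ∈ s, ∀ k ∈ s, i ≠ k → p i ⊓ p k = 0) :
    x ⊓ ∑ i ∈ s, p i = ∑ i ∈ s, x ⊓ p i := by
  classical
  induction s using Finset.induction with
  | empty => simp [inf_eq_right.mpr hx0]
  | @insert i s hns ih =>
      rw [Finset.sum_insert hns, Finset.sum_insert hns]
      have hpi0 : 0 ≤ p i := hcomp i (Finset.mem_insert_self i s)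
      have hS0 : 0 ≤ ∑ k ∈ s, p k :=
        aux_sum_nonneg s p (fun k hk => hcomp k (Finset.mem_insert_of_mem hk))
      have hdisj : p i ⊓ ∑ k ∈ s, p k = 0 :=
        aux_inf_sum_zero hpi0 s p (fun k hk => hcomp k (Finset.mem_insert_of_mem hk))
          (fun k hk => hd i (Finset.mem_insert_self i s) k (Finset.mem_insert_of_mem hk)
            (fun he' => hns (he' ▸ hk)))
      have hd2 : (x ⊓ p i) ⊓ (x ⊓ ∑ k ∈ s, p k) = 0 := by
        refine le_antisymm ?_ (le_inf (le_inf hx0 hpi0) (le_inf hx0 hS0))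
        calc (x ⊓ p i) ⊓ (x ⊓ ∑ k ∈ s, p k) ≤ p i ⊓ ∑ k ∈ s, p k :=
              inf_le_inf inf_le_right inf_le_right
          _ = 0 := hdisj
      calc x ⊓ (p i + ∑ k ∈ s, p k) = x ⊓ (p i ⊔ ∑ k ∈ s, p k) := by
            rw [aux_add_eq_sup hdisj]
        _ = (x ⊓ p i) ⊔ (x ⊓ ∑ k ∈ s, p k) := aux_inf_sup_left _ _ _
        _ = (x ⊓ p i) + (x ⊓ ∑ k ∈ s, p k) := (aux_add_eq_sup hd2).symm
        _ = x ⊓ p i + ∑ k ∈ s, x ⊓ p k := by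
            rw [ih (fun k hk => hcomp k (Finset.mem_insert_of_mem hk))
              (fun a ha b hb hab => hd a (Finset.mem_insert_of_mem ha) b (Finset.mem_insert_of_mem hb) hab)]

lemma charge_sum {ι : Type*} {F : Type*} [Lattice F] [AddCommGroup F]
    (he : 0 ≤ e) {μ : α → F} (hc : IsChargeOn e μ) (s : Finset ι) (p : ι → α)
    (hcomp : ∀ i ∈ s, p i ∈ Comp e)
    (hd : ∀ i ∈ s, ∀ k ∈ s, i ≠ k → p i ⊓ p k = 0) :
    μ (∑ i ∈ s, p i) = ∑ i ∈ s, μ (p i) := by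
  classical
  induction s using Finset.induction with
  | empty => simpa using hc.1
  | @insert i s hns ih =>
      rw [Finset.sum_insert hns, Finset.sum_insert hns]
      rw [hc.2 (p i) (∑ k ∈ s, p k) (hcomp i (Finset.mem_insert_self i s))
        (comp_sum he s p (fun k hk => hcomp k (Finset.mem_insert_of_mem hk))
          (fun a ha b hb hab => hd a (Finset.mem_insert_of_mem ha) b (Finset.mem_insert_of_mem hb) hab))
        (aux_inf_sum_zero (comp_nonneg (hcomp i (Finset.mem_insert_self i s))) s p
          (fun k hk => comp_nonneg (hcomp k (Finset.mem_insert_of_mem hk)))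
          (fun k hk => hd i (Finset.mem_insert_self i s) k (Finset.mem_insert_of_mem hk)
            (fun he' => hns (he' ▸ hk))))]
      rw [ih (fun k hk => hcomp k (Finset.mem_insert_of_mem hk))
        (fun a ha b hb hab => hd a (Finset.mem_insert_of_mem ha) b (Finset.mem_insert_of_mem hb) hab)]

end AuxComp

section AuxProj
variable {α : Type*} [ConditionallyCompleteLattice α] [AddCommGroup α]
  [CovariantClass α α (· + ·) (· ≤ ·)]

lemma projChain_nonempty (f x : α) : (projChain f x).Nonempty := ⟨x ⊓ (0 : ℕ) • |f|, 0, rfl⟩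

lemma isLUB_projP {x : α} (f : α) (hx : 0 ≤ x) : IsLUB (projChain f x) (projP f x) := by
  have hub : ∀ y ∈ projChain f x, y ≤ x := by rintro y ⟨n, rfl⟩; exact inf_le_left
  have hex : ∃ s, IsLUB (projChain f x) s :=
    ⟨sSup (projChain f x), isLUB_csSup (projChain_nonempty f x) ⟨x, hub⟩⟩
  rw [projP, dif_pos hex]
  exact hex.choose_spec

lemma projP_nonneg {x : α} (f : α) (hx : 0 ≤ x) : 0 ≤ projP f x := by
  have h0 : (0 : α) ∈ projChain f x := ⟨0, by rw [zero_nsmul, inf_eq_right.mpr hx]⟩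
  exact (isLUB_projP f hx).1 h0

lemma projP_le {x : α} (f : α) (hx : 0 ≤ x) : projP f x ≤ x :=
  (isLUB_projP f hx).2 (by rintro y ⟨n, rfl⟩; exact inf_le_left)

lemma projP_mono_left {x f g : α} (hx : 0 ≤ x) (h : |f| ≤ |g|) : projP f x ≤ projP g x := by
  refine (isLUB_projP f hx).2 ?_
  rintro y ⟨n, rfl⟩
  calc x ⊓ n • |f| ≤ x ⊓ n • |g| := inf_le_inf_left x (nsmul_le_nsmul_right h n)
    _ ≤ projP g x := (isLUB_projP g hx).1 ⟨n, rfl⟩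

lemma projP_zero {x : α} (hx : 0 ≤ x) : projP (0 : α) x = 0 := by
  refine le_antisymm ((isLUB_projP 0 hx).2 ?_) (projP_nonneg 0 hx)
  rintro y ⟨n, rfl⟩
  rw [abs_zero, smul_zero, inf_eq_right.mpr hx]

lemma projP_compl_disj {e γ : α} (he : 0 ≤ e) (hγ : 0 ≤ γ) :
    γ ⊓ (e - projP γ e) = 0 := by
  set p := projP γ e with hp
  have hlub := isLUB_projP (x := e) γ he
  have hpe : p ≤ e := projP_le γ he
  set w := γ ⊓ (e - p) with hw
  have hw0 : 0 ≤ w := le_inf hγ (sub_nonneg.mpr hpe)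
  have hwγ : w ≤ γ := inf_le_left
  have key : ∀ n : ℕ, n • w ≤ e ⊓ (n • |γ|) := by
    intro n
    induction n with
    | zero => rw [zero_nsmul, zero_nsmul, inf_eq_right.mpr he]
    | succ n ih =>
        have h1 : e ⊓ (n • |γ|) ≤ p := hlub.1 ⟨n, rfl⟩
        have h2 : e ⊓ (n • |γ|) ≤ e - w := by
          have hwep : w ≤ e - p := inf_le_right
          have : p ≤ e - w := by
            have := sub_le_sub_left hwep e
            rwa [sub_sub_cancel] at this
          exact h1.trans this
        have step : e ⊓ (n • |γ|) + w ≤ e ⊓ ((n + 1) • |γ|) := by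
          rw [succ_nsmul]
          have h3 := aux_add_inf_add_le (e - w) w (n • |γ|) |γ|
          rw [sub_add_cancel] at h3
          refine le_trans ?_ h3
          refine add_le_add ?_ ?_
          · exact le_inf h2 inf_le_right
          · exact le_inf le_rfl (hwγ.trans (le_abs_self γ))
        rw [succ_nsmul]
        exact (add_le_add_left ih w).trans step
  have hb : ∀ n : ℕ, n • w ≤ p := fun n => (key n).trans (hlub.1 ⟨n, rfl⟩)
  exact le_antisymm (aux_le_zero_of_nsmul_le hb) hw0

lemma projP_disj {e x γ : α} (he : 0 ≤ e) (hx0 : 0 ≤ x) (hd : x ⊓ |γ| = 0) :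
    x ⊓ projP γ e = 0 := by
  refine aux_inf_eq_zero_of_isLUB (isLUB_projP γ he) (projChain_nonempty γ e) ?_
  rintro y ⟨n, rfl⟩
  refine le_antisymm ?_ (le_inf hx0 (le_inf he (nsmul_nonneg (abs_nonneg γ) n)))
  calc x ⊓ (e ⊓ n • |γ|) ≤ x ⊓ (n • |γ|) := inf_le_inf_left x inf_le_right
    _ ≤ n • (x ⊓ |γ|) := aux_inf_nsmul_le hx0 (abs_nonneg γ) n
    _ = 0 := by rw [hd, smul_zero]

lemma projP_comp {e γ : α} (he : 0 ≤ e) (hγ : 0 ≤ γ) : projP γ e ∈ Comp e := by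
  show projP γ e ⊓ (e - projP γ e) = 0
  rw [inf_comm]
  refine projP_disj he (sub_nonneg.mpr (projP_le γ he)) ?_
  rw [abs_of_nonneg hγ, inf_comm]
  exact projP_compl_disj he hγ

end AuxProj


section CRTFacts

variable {E : Type u} {G : Type v}
variable [ConditionallyCompleteLattice E] [AddCommGroup E] [Module ℝ E]
  [CovariantClass E E (· + ·) (· ≤ ·)] [PosSMulMono ℝ E]
variable [ConditionallyCompleteLattice G] [AddCommGroup G] [Module ℝ G]
  [CovariantClass G G (· + ·) (· ≤ ·)] [PosSMulMono ℝ G]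
variable (C : CRT E G)

namespace CRT

lemma j_nonneg {x : E} : 0 ≤ C.j x ↔ 0 ≤ x := C.compl.bipos x

lemma j_le_iff {x y : E} : C.j x ≤ C.j y ↔ x ≤ y := by
  rw [← sub_nonneg, ← map_sub, C.j_nonneg, sub_nonneg]

lemma j_inj : Function.Injective ⇑C.j := fun x y h =>
  le_antisymm (C.j_le_iff.mp h.le) (C.j_le_iff.mp h.ge)

lemma j_sup (x y : E) : C.j (x ⊔ y) = C.j x ⊔ C.j y := C.compl.latHom x y

lemma j_inf (x y : E) : C.j (x ⊓ y) = C.j x ⊓ C.j y := by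
  have h1 : x ⊓ y = -(-x ⊔ -y) := by rw [neg_sup, neg_neg, neg_neg]
  rw [h1, map_neg, C.j_sup, map_neg, map_neg, neg_sup, neg_neg, neg_neg]

lemma j_abs (x : E) : C.j |x| = |C.j x| := by
  show C.j (x ⊔ -x) = C.j x ⊔ -(C.j x)
  rw [C.j_sup, map_neg]

lemma e_pos : (0 : E) < C.e := C.triple.weakUnit.1

lemma e_nonneg : (0 : E) ≤ C.e := C.e_pos.le

lemma T_fix {a : E} (ha : a ∈ C.R) : C.T a = a := by
  obtain ⟨x, rfl⟩ := ha
  exact C.triple.idem x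

lemma R_mem (x : E) : C.T x ∈ C.R := ⟨x, rfl⟩

lemma R_zero : (0 : E) ∈ C.R := ⟨0, map_zero _⟩

lemma R_e : C.e ∈ C.R := ⟨C.e, C.triple.unitFix⟩

lemma R_add {a b : E} (ha : a ∈ C.R) (hb : b ∈ C.R) : a + b ∈ C.R := by
  obtain ⟨x, rfl⟩ := ha; obtain ⟨y, rfl⟩ := hb; exact ⟨x + y, map_add _ x y⟩

lemma R_neg {a : E} (ha : a ∈ C.R) : -a ∈ C.R := by
  obtain ⟨x, rfl⟩ := ha; exact ⟨-x, map_neg _ x⟩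

lemma R_sub {a b : E} (ha : a ∈ C.R) (hb : b ∈ C.R) : a - b ∈ C.R := by
  rw [sub_eq_add_neg]; exact C.R_add ha (C.R_neg hb)

lemma R_smul {a : E} (ha : a ∈ C.R) (r : ℝ) : r • a ∈ C.R := by
  obtain ⟨x, rfl⟩ := ha; exact ⟨r • x, map_smul _ r x⟩

lemma R_nsmul {a : E} (ha : a ∈ C.R) (n : ℕ) : n • a ∈ C.R := by
  rw [← Nat.cast_smul_eq_nsmul ℝ]; exact C.R_smul ha _

lemma R_sup {a b : E} (ha : a ∈ C.R) (hb : b ∈ C.R) : a ⊔ b ∈ C.R :=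
  C.triple.rangeSupClosed a b ha hb

lemma R_inf {a b : E} (ha : a ∈ C.R) (hb : b ∈ C.R) : a ⊓ b ∈ C.R := by
  have h1 : a ⊓ b = -(-a ⊔ -b) := by rw [neg_sup, neg_neg, neg_neg]
  rw [h1]; exact C.R_neg (C.R_sup (C.R_neg ha) (C.R_neg hb))

lemma R_abs {a : E} (ha : a ∈ C.R) : |a| ∈ C.R := by
  show a ⊔ -a ∈ C.R
  exact C.R_sup ha (C.R_neg ha)

lemma R_Linf {a : E} (ha : a ∈ C.R) : a ∈ C.Linf :=
  ⟨|a|, C.R_abs ha, abs_nonneg a, le_rfl⟩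

lemma Linf_add {a b : E} (ha : a ∈ C.Linf) (hb : b ∈ C.Linf) : a + b ∈ C.Linf := by
  obtain ⟨g, hgR, hg0, hag⟩ := ha
  obtain ⟨g', hgR', hg0', hag'⟩ := hb
  exact ⟨g + g', C.R_add hgR hgR', add_nonneg hg0 hg0',
    (abs_add_le a b).trans (add_le_add hag hag')⟩

lemma Linf_neg {a : E} (ha : a ∈ C.Linf) : -a ∈ C.Linf := by
  obtain ⟨g, hgR, hg0, hag⟩ := ha
  exact ⟨g, hgR, hg0, by rwa [abs_neg]⟩

lemma Linf_smul {a : E} (ha : a ∈ C.Linf) (r : ℝ) : r • a ∈ C.Linf := by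
  obtain ⟨g, hgR, hg0, hag⟩ := ha
  have h1 : a ≤ g := (le_abs_self a).trans hag
  have h2 : -a ≤ g := (neg_le_abs a).trans hag
  refine ⟨|r| • g, C.R_smul hgR |r|, smul_nonneg (abs_nonneg r) hg0, ?_⟩
  show (r • a) ⊔ -(r • a) ≤ |r| • g
  refine sup_le ?_ ?_
  · rcases le_total 0 r with hr | hr
    · rw [abs_of_nonneg hr]; exact smul_le_smul_of_nonneg_left h1 hr
    · rw [abs_of_nonpos hr]
      calc r • a = (-r) • (-a) := by rw [neg_smul, smul_neg, neg_neg]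
        _ ≤ (-r) • g := smul_le_smul_of_nonneg_left h2 (neg_nonneg.mpr hr)
  · rcases le_total 0 r with hr | hr
    · rw [abs_of_nonneg hr]
      calc -(r • a) = r • (-a) := by rw [smul_neg]
        _ ≤ r • g := smul_le_smul_of_nonneg_left h2 hr
    · rw [abs_of_nonpos hr]
      calc -(r • a) = (-r) • a := by rw [neg_smul]
        _ ≤ (-r) • g := smul_le_smul_of_nonneg_left h1 (neg_nonneg.mpr hr)

lemma comp_Linf {p : E} (hp : p ∈ Comp C.e) : p ∈ C.Linf :=
  ⟨C.e, C.R_e, C.e_nonneg, by rw [abs_of_nonneg (comp_nonneg hp)]; exact comp_le hp⟩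

end CRT

end CRTFacts

section CRTMul

variable {E : Type u} {G : Type v}
variable [ConditionallyCompleteLattice E] [AddCommGroup E] [Module ℝ E]
  [CovariantClass E E (· + ·) (· ≤ ·)] [PosSMulMono ℝ E]
variable [ConditionallyCompleteLattice G] [AddCommGroup G] [Module ℝ G]
  [CovariantClass G G (· + ·) (· ≤ ·)] [PosSMulMono ℝ G]
variable (C : CRT E G)

namespace CRT

lemma j_sm {g : E} (hg : g ∈ C.Linf) (f : E) :
    C.j (C.sm g f) = C.mul (C.j g) (C.j f) := by
  have hmem : C.mul (C.j g) (C.j f) ∈ Set.range ⇑C.j := C.mulClosed g f hg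
  exact Function.invFun_eq hmem

lemma gm_smul_left (r : ℝ) (x y : G) : C.mul (r • x) y = r • C.mul x y :=
  C.falg.smul_left r x y

lemma gm_add_left (x y z : G) : C.mul (x + y) z = C.mul x z + C.mul y z :=
  C.falg.add_left x y z

lemma gm_comm (x y : G) : C.mul x y = C.mul y x := C.falg.comm x y

lemma gm_zero_left (y : G) : C.mul 0 y = 0 := by
  have h : C.mul ((0 : ℝ) • (0 : G)) y = (0 : ℝ) • C.mul 0 y := C.gm_smul_left 0 0 y
  rw [zero_smul, zero_smul] at h
  exact h

lemma gm_zero_right (x : G) : C.mul x 0 = 0 := by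
  rw [C.gm_comm, C.gm_zero_left]

lemma gm_add_right (x y z : G) : C.mul x (y + z) = C.mul x y + C.mul x z := by
  rw [C.gm_comm, C.gm_add_left, C.gm_comm y x, C.gm_comm z x]

lemma gm_neg_left (x y : G) : C.mul (-x) y = -(C.mul x y) := by
  have h : -x = (-1 : ℝ) • x := by rw [neg_smul, one_smul]
  rw [h, C.gm_smul_left, neg_smul, one_smul]

lemma gm_sub_left (x y z : G) : C.mul (x - y) z = C.mul x z - C.mul y z := by
  rw [sub_eq_add_neg, C.gm_add_left, C.gm_neg_left, sub_eq_add_neg]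

lemma gm_sub_right (x y z : G) : C.mul x (y - z) = C.mul x y - C.mul x z := by
  rw [C.gm_comm, C.gm_sub_left, C.gm_comm y x, C.gm_comm z x]

lemma gm_nonneg {x y : G} (hx : 0 ≤ x) (hy : 0 ≤ y) : 0 ≤ C.mul x y :=
  C.falg.mul_nonneg x y hx hy

lemma gm_mono_left {x y z : G} (h : x ≤ y) (hz : 0 ≤ z) : C.mul x z ≤ C.mul y z := by
  have h1 : 0 ≤ C.mul (y - x) z := C.gm_nonneg (sub_nonneg.mpr h) hz
  rw [C.gm_sub_left] at h1
  exact sub_nonneg.mp h1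

lemma gm_mono_right {x y z : G} (h : x ≤ y) (hz : 0 ≤ z) : C.mul z x ≤ C.mul z y := by
  rw [C.gm_comm z x, C.gm_comm z y]
  exact C.gm_mono_left h hz

lemma gm_one_left (x : G) : C.mul (C.j C.e) x = x := C.falg.one_mul x

lemma gm_one_right (x : G) : C.mul x (C.j C.e) = x := by
  rw [C.gm_comm]; exact C.falg.one_mul x

lemma gm_disj {x y : G} (hx : 0 ≤ x) (hy : 0 ≤ y) (h : x ⊓ y = 0) : C.mul x y = 0 := by
  have h1 : C.mul y x ⊓ x = 0 := C.falg.disj y x x (by rwa [inf_comm]) hx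
  have h2 : C.mul x y ⊓ C.mul y x = 0 := C.falg.disj x (C.mul y x) y (by rwa [inf_comm] at h1) hy
  rw [C.gm_comm y x, inf_idem] at h2
  exact h2

lemma gm_sum_left {ι : Type*} (s : Finset ι) (f : ι → G) (z : G) :
    C.mul (∑ i ∈ s, f i) z = ∑ i ∈ s, C.mul (f i) z := by
  classical
  induction s using Finset.induction with
  | empty => simpa using C.gm_zero_left z
  | @insert i s hns ih =>
      rw [Finset.sum_insert hns, Finset.sum_insert hns, C.gm_add_left, ih]

lemma gm_sum_right {ι : Type*} (s : Finset ι) (f : ι → G) (z : G) :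
    C.mul z (∑ i ∈ s, f i) = ∑ i ∈ s, C.mul z (f i) := by
  rw [C.gm_comm, C.gm_sum_left]
  exact Finset.sum_congr rfl fun i _ => C.gm_comm (f i) z

lemma gm_sq_zero {d : G} (h0 : 0 ≤ d) (hle : d ≤ C.j C.e) (hsq : C.mul d d = 0) :
    d = 0 := by
  have half : ∀ c : G, 0 ≤ c → c ≤ C.j C.e → C.mul c c = 0 → c + c ≤ C.j C.e := by
    intro c hc0 hcle hcsq
    have hexp : C.mul (C.j C.e - c) (C.j C.e - c) = C.j C.e - (c + c) + C.mul c c := by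
      rw [C.gm_sub_left, C.gm_sub_right, C.gm_sub_right, C.gm_one_right, C.gm_one_left,
        C.gm_one_right]
      abel
    have hnn : (0 : G) ≤ C.mul (C.j C.e - c) (C.j C.e - c) :=
      C.gm_nonneg (sub_nonneg.mpr hcle) (sub_nonneg.mpr hcle)
    rw [hexp, hcsq, add_zero] at hnn
    exact sub_nonneg.mp hnn
  have pow2 : ∀ n : ℕ, (2 ^ n) • d ≤ C.j C.e := by
    intro n
    induction n with
    | zero => simpa using hle
    | succ n ih =>
        have hc0 : 0 ≤ (2 ^ n) • d := nsmul_nonneg h0 _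
        have hcsq : C.mul ((2 ^ n) • d) ((2 ^ n) • d) = 0 := by
          rw [← Nat.cast_smul_eq_nsmul ℝ, C.gm_smul_left, C.gm_comm, C.gm_smul_left, hsq]
          simp
        have := half _ hc0 ih hcsq
        calc (2 ^ (n + 1)) • d = (2 ^ n) • d + (2 ^ n) • d := by
              rw [pow_succ, mul_comm, mul_nsmul, two_nsmul, nsmul_add]
          _ ≤ C.j C.e := this
  have hall : ∀ n : ℕ, n • d ≤ C.j C.e := fun n =>
    (nsmul_le_nsmul_left h0 (Nat.lt_two_pow_self (n := n)).le).trans (pow2 n)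
  exact le_antisymm (aux_le_zero_of_nsmul_le hall) h0

lemma j_comp {p : E} (hp : p ∈ Comp C.e) : C.j p ∈ Comp (C.j C.e) := by
  show C.j p ⊓ (C.j C.e - C.j p) = 0
  rw [← map_sub, ← C.j_inf, hp, map_zero]

lemma gm_comp_inf {a b : G} (ha : a ∈ Comp (C.j C.e)) (hb : b ∈ Comp (C.j C.e)) :
    C.mul a b = a ⊓ b := by
  have h0a := comp_nonneg ha
  have h0b := comp_nonneg hb
  refine le_antisymm (le_inf ?_ ?_) ?_
  · calc C.mul a b ≤ C.mul a (C.j C.e) := C.gm_mono_right (comp_le hb) h0a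
      _ = a := C.gm_one_right a
  · calc C.mul a b = C.mul b a := C.gm_comm a b
      _ ≤ C.mul b (C.j C.e) := C.gm_mono_right (comp_le ha) h0b
      _ = b := C.gm_one_right b
  · have hc : a ⊓ b ∈ Comp (C.j C.e) := comp_inf ha hb
    have hcc : C.mul (a ⊓ b) (a ⊓ b) = a ⊓ b := by
      have h1 : C.mul (a ⊓ b) (C.j C.e - (a ⊓ b)) = 0 :=
        C.gm_disj (comp_nonneg hc) (aux_nonneg_right hc) hc
      have h2 := C.gm_sub_right (a ⊓ b) (C.j C.e) (a ⊓ b)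
      rw [h1] at h2
      have h3 : C.mul (a ⊓ b) (C.j C.e) - C.mul (a ⊓ b) (a ⊓ b) = 0 := h2.symm
      rw [C.gm_one_right] at h3
      have := sub_eq_zero.mp h3
      exact this.symm
    calc a ⊓ b = C.mul (a ⊓ b) (a ⊓ b) := hcc.symm
      _ ≤ C.mul a (a ⊓ b) := C.gm_mono_left inf_le_left (le_inf h0a h0b)
      _ ≤ C.mul a b := C.gm_mono_right inf_le_right h0a

lemma gm_posPart (x q : G) (hq : 0 ≤ q) :
    (C.mul x q) ⊔ 0 = C.mul (x ⊔ 0) q := by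
  have hd : (C.mul (x⁺) q) ⊓ (C.mul (x⁻) q) = 0 := by
    have h1 := C.falg.disj (x⁺) (x⁻) q (posPart_inf_negPart_eq_zero x) hq
    have h2 := C.falg.disj (x⁻) (C.mul (x⁺) q) q (by rwa [inf_comm] at h1) hq
    rwa [inf_comm] at h2
  have hx : C.mul x q = C.mul (x⁺) q - C.mul (x⁻) q := by
    rw [← C.gm_sub_left, posPart_sub_negPart]
  rw [hx, aux_posPart_of_disj hd]
  rfl

lemma gm_abs (x q : G) (hq : 0 ≤ q) : |C.mul x q| = C.mul |x| q := by
  have hd : (C.mul (x⁺) q) ⊓ (C.mul (x⁻) q) = 0 := by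
    have h1 := C.falg.disj (x⁺) (x⁻) q (posPart_inf_negPart_eq_zero x) hq
    have h2 := C.falg.disj (x⁻) (C.mul (x⁺) q) q (by rwa [inf_comm] at h1) hq
    rwa [inf_comm] at h2
  have hx : C.mul x q = C.mul (x⁺) q - C.mul (x⁻) q := by
    rw [← C.gm_sub_left, posPart_sub_negPart]
  rw [hx, aux_abs_sub_of_disj hd, ← C.gm_add_left, posPart_add_negPart]

end CRT

end CRTMul

section CRTSm

variable {E : Type u} {G : Type v}
variable [ConditionallyCompleteLattice E] [AddCommGroup E] [Module ℝ E]
  [CovariantClass E E (· + ·) (· ≤ ·)] [PosSMulMono ℝ E]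
variable [ConditionallyCompleteLattice G] [AddCommGroup G] [Module ℝ G]
  [CovariantClass G G (· + ·) (· ≤ ·)] [PosSMulMono ℝ G]
variable (C : CRT E G)

namespace CRT

lemma sm_nonneg {g x : E} (hg : g ∈ C.Linf) (hg0 : 0 ≤ g) (hx0 : 0 ≤ x) :
    0 ≤ C.sm g x := by
  rw [← C.j_nonneg, C.j_sm hg]
  exact C.gm_nonneg (C.j_nonneg.mpr hg0) (C.j_nonneg.mpr hx0)

lemma sm_mono_right {g x y : E} (hg : g ∈ C.Linf) (hg0 : 0 ≤ g) (hxy : x ≤ y) :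
    C.sm g x ≤ C.sm g y := by
  rw [← C.j_le_iff, C.j_sm hg, C.j_sm hg]
  exact C.gm_mono_right (C.j_le_iff.mpr hxy) (C.j_nonneg.mpr hg0)

lemma sm_add_right {g : E} (hg : g ∈ C.Linf) (x y : E) :
    C.sm g (x + y) = C.sm g x + C.sm g y := by
  apply C.j_inj
  rw [map_add, C.j_sm hg, C.j_sm hg, C.j_sm hg, map_add, C.gm_add_right]

lemma sm_zero_right {g : E} (hg : g ∈ C.Linf) : C.sm g 0 = 0 := by
  apply C.j_inj
  rw [C.j_sm hg, map_zero, C.gm_zero_right]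

lemma sm_sub_right {g : E} (hg : g ∈ C.Linf) (x y : E) :
    C.sm g (x - y) = C.sm g x - C.sm g y := by
  apply C.j_inj
  rw [map_sub, C.j_sm hg, C.j_sm hg, C.j_sm hg, map_sub, C.gm_sub_right]

lemma sm_sum_right {g : E} (hg : g ∈ C.Linf) {ι : Type*} (s : Finset ι) (f : ι → E) :
    C.sm g (∑ i ∈ s, f i) = ∑ i ∈ s, C.sm g (f i) := by
  classical
  induction s using Finset.induction with
  | empty => simpa using C.sm_zero_right hg
  | @insert i s hns ih =>
      rw [Finset.sum_insert hns, Finset.sum_insert hns, C.sm_add_right hg, ih]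

lemma sm_add_left {a b : E} (ha : a ∈ C.Linf) (hb : b ∈ C.Linf) (x : E) :
    C.sm (a + b) x = C.sm a x + C.sm b x := by
  apply C.j_inj
  rw [map_add, C.j_sm (C.Linf_add ha hb), C.j_sm ha, C.j_sm hb, map_add, C.gm_add_left]

lemma sm_neg_left {a : E} (ha : a ∈ C.Linf) (x : E) : C.sm (-a) x = -(C.sm a x) := by
  apply C.j_inj
  rw [map_neg, C.j_sm (C.Linf_neg ha), C.j_sm ha, map_neg, C.gm_neg_left]

lemma sm_sub_left {a b : E} (ha : a ∈ C.Linf) (hb : b ∈ C.Linf) (x : E) :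
    C.sm (a - b) x = C.sm a x - C.sm b x := by
  rw [sub_eq_add_neg, C.sm_add_left ha (C.Linf_neg hb), C.sm_neg_left hb, sub_eq_add_neg]

lemma sm_smul_left {a : E} (ha : a ∈ C.Linf) (r : ℝ) (x : E) :
    C.sm (r • a) x = r • C.sm a x := by
  apply C.j_inj
  rw [map_smul, C.j_sm (C.Linf_smul ha r), C.j_sm ha, map_smul, C.gm_smul_left]

lemma sm_zero_left (x : E) : C.sm 0 x = 0 := by
  have h0 : (0 : E) ∈ C.Linf := ⟨0, C.R_zero, le_rfl, by rw [abs_zero]⟩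
  apply C.j_inj
  rw [C.j_sm h0, map_zero, C.gm_zero_left]

lemma sm_e {a : E} (ha : a ∈ C.Linf) : C.sm a C.e = a := by
  apply C.j_inj
  rw [C.j_sm ha, C.gm_one_right]

lemma T_mono {x y : E} (h : x ≤ y) : C.T x ≤ C.T y := by
  have h1 : 0 ≤ C.T (y - x) := C.triple.pos _ (sub_nonneg.mpr h)
  rw [map_sub] at h1
  exact sub_nonneg.mp h1

lemma T_nonneg {x : E} (h : 0 ≤ x) : 0 ≤ C.T x := C.triple.pos x h

/-- The key conditional-expectation band lemma. -/
lemma disj_T {γ r : E} (hγR : γ ∈ C.R) (hγ0 : 0 ≤ γ) (hr : r ∈ Comp C.e)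
    (hd : γ ⊓ r = 0) : γ ⊓ C.T r = 0 := by
  set p := projP γ C.e with hp
  have he := C.e_nonneg
  have hlub := isLUB_projP (x := C.e) γ he
  have hpR : p ∈ C.R := by
    have hchain : projChain γ C.e ⊆ C.R := by
      rintro y ⟨n, rfl⟩
      exact C.R_inf C.R_e (C.R_nsmul (C.R_abs hγR) n)
    have h1 : sSup (projChain γ C.e) = p := hlub.csSup_eq (projChain_nonempty γ C.e)
    have h2 := C.triple.rangeDedekind _ hchain (projChain_nonempty γ C.e)
      ⟨C.e, by rintro y ⟨n, rfl⟩; exact inf_le_left⟩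
    rwa [h1] at h2
  have hrp : r ⊓ p = 0 :=
    projP_disj he (comp_nonneg hr) (by rw [abs_of_nonneg hγ0, inf_comm]; exact hd)
  have hrle : r ≤ C.e - p := by
    have h2 : r ⊓ (p + (C.e - p)) ≤ r ⊓ p + r ⊓ (C.e - p) :=
      aux_inf_add_le (comp_nonneg hr) (projP_nonneg γ he) (sub_nonneg.mpr (projP_le γ he))
    have he2 : p + (C.e - p) = C.e := by abel
    rw [he2, hrp, zero_add] at h2
    calc r = r ⊓ C.e := (inf_eq_left.mpr (comp_le hr)).symm
      _ ≤ r ⊓ (C.e - p) := h2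
      _ ≤ C.e - p := inf_le_right
  have hTr : C.T r ≤ C.e - p := by
    have h3 := C.T_mono hrle
    rwa [C.T_fix (C.R_sub C.R_e hpR)] at h3
  have hγc : γ ⊓ (C.e - p) = 0 := projP_compl_disj he hγ0
  refine le_antisymm ?_ (le_inf hγ0 (C.T_nonneg (comp_nonneg hr)))
  calc γ ⊓ C.T r ≤ γ ⊓ (C.e - p) := inf_le_inf_left γ hTr
    _ = 0 := hγc

/-- Multiplying an inequality of `R(T)`-coefficients on a component by `μ` of the
component, for a `T`-absolutely continuous positive charge. -/
lemma sm_mu_mono (μ : E → E) (hband : ∀ q ∈ Comp C.e, μ q ∈ pBand (C.T q))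
    (hpos : ∀ q ∈ Comp C.e, 0 ≤ μ q)
    {a b r : E} (haR : a ∈ C.R) (hbR : b ∈ C.R) (hr : r ∈ Comp C.e)
    (h : C.sm a r ≤ C.sm b r) : C.sm a (μ r) ≤ C.sm b (μ r) := by
  have hμ0 : 0 ≤ μ r := hpos r hr
  have hμband := hband r hr
  have key : ∀ c : E, c ∈ C.R → 0 ≤ c → C.mul (C.j c) (C.j r) = 0 → C.sm c (μ r) = 0 := by
    intro c hcR hc0 hcr
    -- c ⊓ r = 0
    have hd1 : c ⊓ r = 0 := by
      apply C.j_inj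
      rw [C.j_inf, map_zero]
      set d := C.j c ⊓ C.j r with hdd
      have hd0 : 0 ≤ d := le_inf (C.j_nonneg.mpr hc0) (C.j_nonneg.mpr (comp_nonneg hr))
      have hdle : d ≤ C.j C.e :=
        inf_le_right.trans (C.j_le_iff.mpr (comp_le hr))
      have hsq : C.mul d d = 0 := by
        refine le_antisymm ?_ (C.gm_nonneg hd0 hd0)
        calc C.mul d d ≤ C.mul (C.j c) d := C.gm_mono_left inf_le_left hd0
          _ ≤ C.mul (C.j c) (C.j r) := C.gm_mono_right inf_le_right (C.j_nonneg.mpr hc0)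
          _ = 0 := hcr
      exact C.gm_sq_zero hd0 hdle hsq
    -- c ⊓ T r = 0
    have hd2 : c ⊓ C.T r = 0 := C.disj_T hcR hc0 hr hd1
    -- c ⊓ μ r = 0
    have hd3 : c ⊓ μ r = 0 := by
      have hc_disj : c ∈ disjC {C.T r} := by
        intro y hy
        rw [Set.mem_singleton_iff] at hy
        subst hy
        rw [abs_of_nonneg hc0, abs_of_nonneg (C.T_nonneg (comp_nonneg hr))]
        exact hd2
      have h4 := hμband c hc_disj
      rw [abs_of_nonneg hμ0, abs_of_nonneg hc0] at h4
      rw [inf_comm]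
      exact h4
    -- conclude product zero
    apply C.j_inj
    rw [C.j_sm (C.R_Linf hcR), map_zero]
    refine C.gm_disj (C.j_nonneg.mpr hc0) (C.j_nonneg.mpr hμ0) ?_
    rw [← C.j_inf, hd3, map_zero]
  -- the positive part of a - b is killed
  set γ := (a - b) ⊔ 0 with hγ
  set δ := (-(a - b)) ⊔ 0 with hδ
  have hγR : γ ∈ C.R := C.R_sup (C.R_sub haR hbR) C.R_zero
  have hδR : δ ∈ C.R := C.R_sup (C.R_neg (C.R_sub haR hbR)) C.R_zero
  have hγ0 : 0 ≤ γ := le_sup_right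
  have hδ0 : 0 ≤ δ := le_sup_right
  have hγr : C.mul (C.j γ) (C.j r) = 0 := by
    have hjr0 : 0 ≤ C.j r := C.j_nonneg.mpr (comp_nonneg hr)
    have h1 : C.j γ = (C.j (a - b)) ⊔ 0 := by rw [hγ, C.j_sup, map_zero]
    have h2 : C.mul (C.j (a - b)) (C.j r) = C.j (C.sm a r) - C.j (C.sm b r) := by
      rw [map_sub, C.gm_sub_left, C.j_sm (C.R_Linf haR), C.j_sm (C.R_Linf hbR)]
    have h3 : C.mul (C.j (a - b)) (C.j r) ≤ 0 := by
      rw [h2]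
      exact sub_nonpos.mpr (C.j_le_iff.mpr h)
    rw [h1, ← C.gm_posPart _ _ hjr0]
    exact sup_eq_right.mpr h3
  have hγμ : C.sm γ (μ r) = 0 := key γ hγR hγ0 hγr
  have hδμ : 0 ≤ C.sm δ (μ r) := C.sm_nonneg (C.R_Linf hδR) hδ0 hμ0
  have hab : a - b = γ - δ := by
    have := posPart_sub_negPart (a - b)
    rw [← this]; rfl
  have h5 : C.sm a (μ r) - C.sm b (μ r) = C.sm γ (μ r) - C.sm δ (μ r) := by
    rw [← C.sm_sub_left (C.R_Linf haR) (C.R_Linf hbR), hab,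
      C.sm_sub_left (C.R_Linf hγR) (C.R_Linf hδR)]
  have h6 : C.sm a (μ r) - C.sm b (μ r) ≤ 0 := by
    rw [h5, hγμ, zero_sub]
    exact neg_nonpos.mpr hδμ
  exact sub_nonpos.mp h6

end CRT

end CRTSm

section CRTSteps

variable {E : Type u} {G : Type v}
variable [ConditionallyCompleteLattice E] [AddCommGroup E] [Module ℝ E]
  [CovariantClass E E (· + ·) (· ≤ ·)] [PosSMulMono ℝ E]
variable [ConditionallyCompleteLattice G] [AddCommGroup G] [Module ℝ G]
  [CovariantClass G G (· + ·) (· ≤ ·)] [PosSMulMono ℝ G]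
variable (C : CRT E G)

namespace CRT

/-- Multiplying a step function by one of the components of a refinement picks out
the corresponding coefficient. -/
lemma mul_rep {x : E} {n : ℕ} {α p : Fin n → E} (hx : C.IsStdRep x n α p)
    {w : E} (hw : w ∈ Comp C.e) {i : Fin n} (hwi : w ≤ p i)
    (hwk : ∀ k, k ≠ i → w ⊓ p k = 0) :
    C.mul (C.j x) (C.j w) = C.mul (C.j (α i)) (C.j w) := by
  obtain ⟨hα, hp, hdisj, hsum, hval⟩ := hx
  have hjx : C.j x = ∑ k, C.mul (C.j (α k)) (C.j (p k)) := by
    rw [hval, map_sum]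
    exact Finset.sum_congr rfl fun k _ => C.j_sm (C.R_Linf (hα k)) (p k)
  rw [hjx, C.gm_sum_left]
  rw [Finset.sum_eq_single i]
  · rw [C.falg.assoc, C.gm_comp_inf (C.j_comp (hp i)) (C.j_comp hw), ← C.j_inf,
      inf_eq_right.mpr hwi]
  · intro k _ hk
    rw [C.falg.assoc, C.gm_comp_inf (C.j_comp (hp k)) (C.j_comp hw), ← C.j_inf,
      inf_comm, hwk k hk, map_zero, C.gm_zero_right]
  · intro hni
    exact absurd (Finset.mem_univ i) hni

/-- Core comparison lemma: values of `I_μ` on standard representations respect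
the order of the represented step functions. -/
lemma rep_value_le (μ : E → E) (hband : ∀ q ∈ Comp C.e, μ q ∈ pBand (C.T q))
    (hposμ : ∀ q ∈ Comp C.e, 0 ≤ μ q) (hchg : IsChargeOn C.e μ)
    {x y : E} {n m : ℕ} {α p : Fin n → E} {β q : Fin m → E}
    (hx : C.IsStdRep x n α p) (hy : C.IsStdRep y m β q) (hxy : x ≤ y) :
    ∑ i, C.sm (α i) (μ (p i)) ≤ ∑ i, C.sm (β i) (μ (q i)) := by
  obtain ⟨hα, hp, hdisj, hsum, hval⟩ := hx
  obtain ⟨hβ, hq, hdisj', hsum', hval'⟩ := hy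
  have he := C.e_nonneg
  set r : Fin n → Fin m → E := fun i k => p i ⊓ q k with hr
  have hrcomp : ∀ i k, r i k ∈ Comp C.e := fun i k => comp_inf (hp i) (hq k)
  have hp_dec : ∀ i, p i = ∑ k, r i k := by
    intro i
    calc p i = p i ⊓ C.e := (inf_eq_left.mpr (comp_le (hp i))).symm
      _ = p i ⊓ ∑ k, q k := by rw [hsum']
      _ = ∑ k, p i ⊓ q k := inf_sum_of_disj (comp_nonneg (hp i)) _ _
          (fun k _ => comp_nonneg (hq k)) (fun a _ b _ hab => hdisj' a b hab)
  have hq_dec : ∀ k, q k = ∑ i, r i k := by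
    intro k
    calc q k = q k ⊓ C.e := (inf_eq_left.mpr (comp_le (hq k))).symm
      _ = q k ⊓ ∑ i, p i := by rw [hsum]
      _ = ∑ i, q k ⊓ p i := inf_sum_of_disj (comp_nonneg (hq k)) _ _
          (fun i _ => comp_nonneg (hp i)) (fun a _ b _ hab => hdisj a b hab)
      _ = ∑ i, r i k := Finset.sum_congr rfl fun i _ => inf_comm (q k) (p i)
  have hmup : ∀ i, μ (p i) = ∑ k, μ (r i k) := by
    intro i
    rw [hp_dec i]
    refine charge_sum he hchg _ _ (fun k _ => hrcomp i k) ?_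
    intro a _ b _ hab
    refine le_antisymm ?_ (le_inf (le_inf (comp_nonneg (hp i)) (comp_nonneg (hq a)))
      (le_inf (comp_nonneg (hp i)) (comp_nonneg (hq b))))
    calc r i a ⊓ r i b ≤ q a ⊓ q b := inf_le_inf inf_le_right inf_le_right
      _ = 0 := hdisj' a b hab
  have hmuq : ∀ k, μ (q k) = ∑ i, μ (r i k) := by
    intro k
    rw [hq_dec k]
    refine charge_sum he hchg _ _ (fun i _ => hrcomp i k) ?_
    intro a _ b _ hab
    refine le_antisymm ?_ (le_inf (le_inf (comp_nonneg (hp a)) (comp_nonneg (hq k)))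
      (le_inf (comp_nonneg (hp b)) (comp_nonneg (hq k))))
    calc r a k ⊓ r b k ≤ p a ⊓ p b := inf_le_inf inf_le_left inf_le_left
      _ = 0 := hdisj a b hab
  have hxrep : C.IsStdRep x n α p := ⟨hα, hp, hdisj, hsum, hval⟩
  have hyrep : C.IsStdRep y m β q := ⟨hβ, hq, hdisj', hsum', hval'⟩
  have key : ∀ i k, C.sm (α i) (μ (r i k)) ≤ C.sm (β k) (μ (r i k)) := by
    intro i k
    refine C.sm_mu_mono μ hband hposμ (hα i) (hβ k) (hrcomp i k) ?_
    -- sm (α i) (r i k) ≤ sm (β k) (r i k)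
    rw [← C.j_le_iff, C.j_sm (C.R_Linf (hα i)), C.j_sm (C.R_Linf (hβ k))]
    have h1 : C.mul (C.j x) (C.j (r i k)) = C.mul (C.j (α i)) (C.j (r i k)) := by
      refine C.mul_rep hxrep (hrcomp i k) inf_le_left ?_
      intro a ha
      refine le_antisymm ?_ (le_inf (le_inf (comp_nonneg (hp i)) (comp_nonneg (hq k)))
        (comp_nonneg (hp a)))
      calc r i k ⊓ p a ≤ p i ⊓ p a := inf_le_inf_right _ inf_le_left
        _ = 0 := hdisj i a (fun hia => ha hia.symm)
    have h2 : C.mul (C.j y) (C.j (r i k)) = C.mul (C.j (β k)) (C.j (r i k)) := by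
      refine C.mul_rep hyrep (hrcomp i k) inf_le_right ?_
      intro a ha
      refine le_antisymm ?_ (le_inf (le_inf (comp_nonneg (hp i)) (comp_nonneg (hq k)))
        (comp_nonneg (hq a)))
      calc r i k ⊓ q a ≤ q k ⊓ q a := inf_le_inf_right _ inf_le_right
        _ = 0 := hdisj' k a (fun hka => ha hka.symm)
    rw [← h1, ← h2]
    exact C.gm_mono_left (C.j_le_iff.mpr hxy)
      (C.j_nonneg.mpr (comp_nonneg (hrcomp i k)))
  calc ∑ i, C.sm (α i) (μ (p i)) = ∑ i, ∑ k, C.sm (α i) (μ (r i k)) := by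
        refine Finset.sum_congr rfl fun i _ => ?_
        rw [hmup i, C.sm_sum_right (C.R_Linf (hα i))]
    _ ≤ ∑ i, ∑ k, C.sm (β k) (μ (r i k)) :=
        aux_sum_le_sum _ _ _ fun i _ => aux_sum_le_sum _ _ _ fun k _ => key i k
    _ = ∑ k, ∑ i, C.sm (β k) (μ (r i k)) := Finset.sum_comm
    _ = ∑ k, C.sm (β k) (μ (q k)) := by
        refine Finset.sum_congr rfl fun k _ => ?_
        rw [hmuq k, C.sm_sum_right (C.R_Linf (hβ k))]

lemma Imu_eq (μ : E → E) (hband : ∀ q ∈ Comp C.e, μ q ∈ pBand (C.T q))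
    (hposμ : ∀ q ∈ Comp C.e, 0 ≤ μ q) (hchg : IsChargeOn C.e μ)
    {x : E} {n : ℕ} {α p : Fin n → E} (hx : C.IsStdRep x n α p) :
    C.Imu μ x = ∑ i, C.sm (α i) (μ (p i)) := by
  have hex : ∃ v : E, ∃ (n' : ℕ) (α' p' : Fin n' → E), C.IsStdRep x n' α' p' ∧
      v = ∑ i, C.sm (α' i) (μ (p' i)) := ⟨_, n, α, p, hx, rfl⟩
  have hspec : ∃ (n' : ℕ) (α' p' : Fin n' → E), C.IsStdRep x n' α' p' ∧
      C.Imu μ x = ∑ i, C.sm (α' i) (μ (p' i)) := Classical.epsilon_spec hex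
  obtain ⟨m, β, q, hrep, hval⟩ := hspec
  rw [hval]
  exact le_antisymm (C.rep_value_le μ hband hposμ hchg hrep hx le_rfl)
    (C.rep_value_le μ hband hposμ hchg hx hrep le_rfl)

lemma Imu_mono (μ : E → E) (hband : ∀ q ∈ Comp C.e, μ q ∈ pBand (C.T q))
    (hposμ : ∀ q ∈ Comp C.e, 0 ≤ μ q) (hchg : IsChargeOn C.e μ)
    {x y : E} (hx : x ∈ C.Steps) (hy : y ∈ C.Steps) (hxy : x ≤ y) :
    C.Imu μ x ≤ C.Imu μ y := by
  obtain ⟨n, α, p, hrep⟩ := hx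
  obtain ⟨m, β, q, hrep'⟩ := hy
  rw [C.Imu_eq μ hband hposμ hchg hrep, C.Imu_eq μ hband hposμ hchg hrep']
  exact C.rep_value_le μ hband hposμ hchg hrep hrep' hxy

lemma rep_add_R {x : E} {n : ℕ} {α p : Fin n → E} (hx : C.IsStdRep x n α p)
    {a : E} (ha : a ∈ C.R) : C.IsStdRep (x + a) n (fun i => α i + a) p := by
  obtain ⟨hα, hp, hdisj, hsum, hval⟩ := hx
  refine ⟨fun i => C.R_add (hα i) ha, hp, hdisj, hsum, ?_⟩
  calc x + a = ∑ i, C.sm (α i) (p i) + C.sm a C.e := by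
        rw [← hval, C.sm_e (C.R_Linf ha)]
    _ = ∑ i, C.sm (α i) (p i) + ∑ i, C.sm a (p i) := by
        rw [← C.sm_sum_right (C.R_Linf ha), hsum]
    _ = ∑ i, (C.sm (α i) (p i) + C.sm a (p i)) := by rw [Finset.sum_add_distrib]
    _ = ∑ i, C.sm (α i + a) (p i) := by
        refine Finset.sum_congr rfl fun i _ => ?_
        rw [C.sm_add_left (C.R_Linf (hα i)) (C.R_Linf ha)]

lemma Imu_add_R (μ : E → E) (hband : ∀ q ∈ Comp C.e, μ q ∈ pBand (C.T q))
    (hposμ : ∀ q ∈ Comp C.e, 0 ≤ μ q) (hchg : IsChargeOn C.e μ)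
    {x : E} {n : ℕ} {α p : Fin n → E} (hx : C.IsStdRep x n α p)
    {a : E} (ha : a ∈ C.R) :
    C.Imu μ (x + a) = C.Imu μ x + C.sm a (μ C.e) := by
  obtain ⟨hα, hp, hdisj, hsum, hval⟩ := hx
  have hx' : C.IsStdRep x n α p := ⟨hα, hp, hdisj, hsum, hval⟩
  rw [C.Imu_eq μ hband hposμ hchg (C.rep_add_R hx' ha), C.Imu_eq μ hband hposμ hchg hx']
  have hμe : μ C.e = ∑ i, μ (p i) := by
    rw [← hsum]
    exact charge_sum C.e_nonneg hchg _ _ (fun i _ => hp i)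
      (fun a' _ b _ hab => hdisj a' b hab)
  calc ∑ i, C.sm (α i + a) (μ (p i))
      = ∑ i, (C.sm (α i) (μ (p i)) + C.sm a (μ (p i))) := by
        refine Finset.sum_congr rfl fun i _ => ?_
        rw [C.sm_add_left (C.R_Linf (hα i)) (C.R_Linf ha)]
    _ = ∑ i, C.sm (α i) (μ (p i)) + ∑ i, C.sm a (μ (p i)) := by
        rw [Finset.sum_add_distrib]
    _ = ∑ i, C.sm (α i) (μ (p i)) + C.sm a (μ C.e) := by
        rw [hμe, C.sm_sum_right (C.R_Linf ha)]

lemma rep_posPart {x : E} {n : ℕ} {α p : Fin n → E} (hx : C.IsStdRep x n α p) :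
    C.IsStdRep (x ⊔ 0) n (fun i => α i ⊔ 0) p := by
  obtain ⟨hα, hp, hdisj, hsum, hval⟩ := hx
  refine ⟨fun i => C.R_sup (hα i) C.R_zero, hp, hdisj, hsum, ?_⟩
  apply C.j_inj
  have hjx : C.j x = ∑ i, C.mul (C.j (α i)) (C.j (p i)) := by
    rw [hval, map_sum]
    exact Finset.sum_congr rfl fun i _ => C.j_sm (C.R_Linf (hα i)) (p i)
  have habs : ∀ i k, i ≠ k →
      |C.mul (C.j (α i)) (C.j (p i))| ⊓ |C.mul (C.j (α k)) (C.j (p k))| = 0 := by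
    intro i k hik
    have hpi0 : (0:G) ≤ C.j (p i) := C.j_nonneg.mpr (comp_nonneg (hp i))
    have hpk0 : (0:G) ≤ C.j (p k) := C.j_nonneg.mpr (comp_nonneg (hp k))
    rw [C.gm_abs _ _ hpi0, C.gm_abs _ _ hpk0]
    have hd0 : C.j (p i) ⊓ C.j (p k) = 0 := by
      rw [← C.j_inf, hdisj i k hik, map_zero]
    have h1 := C.falg.disj (C.j (p i)) (C.j (p k)) |C.j (α i)| hd0 (abs_nonneg _)
    have h2 := C.falg.disj (C.j (p k)) (C.mul (C.j (p i)) |C.j (α i)|) |C.j (α k)|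
      (by rwa [inf_comm] at h1) (abs_nonneg _)
    rw [C.gm_comm |C.j (α i)| (C.j (p i)), C.gm_comm |C.j (α k)| (C.j (p k))]
    rw [inf_comm]
    exact h2
  calc C.j (x ⊔ 0) = C.j x ⊔ 0 := by rw [C.j_sup, map_zero]
    _ = (∑ i, C.mul (C.j (α i)) (C.j (p i))) ⊔ 0 := by rw [hjx]
    _ = ∑ i, (C.mul (C.j (α i)) (C.j (p i)) ⊔ 0) :=
        aux_posPart_sum_of_disj _ _ (fun i _ k _ hik => habs i k hik)
    _ = ∑ i, C.mul (C.j (α i) ⊔ 0) (C.j (p i)) := by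
        refine Finset.sum_congr rfl fun i _ => ?_
        rw [C.gm_posPart _ _ (C.j_nonneg.mpr (comp_nonneg (hp i)))]
    _ = ∑ i, C.j (C.sm (α i ⊔ 0) (p i)) := by
        refine Finset.sum_congr rfl fun i _ => ?_
        rw [C.j_sm (C.R_Linf (C.R_sup (hα i) C.R_zero)), C.j_sup, map_zero]
    _ = C.j (∑ i, C.sm (α i ⊔ 0) (p i)) := (map_sum _ _ _).symm

lemma steps_zero : (0 : E) ∈ C.Steps := by
  refine ⟨1, fun _ => 0, fun _ => C.e, fun _ => C.R_zero, fun _ => comp_e C.e_nonneg,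
    ?_, ?_, ?_⟩
  · intro i k hik
    exact absurd (Subsingleton.elim i k) hik
  · rw [Fin.sum_univ_one]
  · rw [Fin.sum_univ_one, C.sm_zero_left]

end CRT

end CRTSteps

section AuxSum

variable {α : Type*} [Lattice α] [AddCommGroup α] [CovariantClass α α (· + ·) (· ≤ ·)]

lemma aux_abel (t : ℕ → α) (N : ℕ) :
    ∑ k ∈ Finset.range N, k • (t k - t (k + 1)) =
      (∑ k ∈ Finset.range N, t (k + 1)) - N • t N := by
  induction N with
  | zero => simp
  | succ N ih =>
      rw [Finset.sum_range_succ, Finset.sum_range_succ, ih, succ_nsmul, nsmul_sub]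
      abel

lemma aux_sum_two_mul (g : ℕ → α) (N : ℕ) :
    ∑ i ∈ Finset.range (2 * N), g i =
      ∑ i ∈ Finset.range N, (g (2 * i) + g (2 * i + 1)) := by
  induction N with
  | zero => simp
  | succ N ih =>
      have h2 : 2 * (N + 1) = (2 * N + 1) + 1 := by ring
      rw [h2, Finset.sum_range_succ, Finset.sum_range_succ, ih, Finset.sum_range_succ]
      have h3 : 2 * N + 1 + 1 = 2 * (N + 1) := by ring
      abel

end AuxSum

section CRTFreud

variable {E : Type u} {G : Type v}
variable [ConditionallyCompleteLattice E] [AddCommGroup E] [Module ℝ E]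
  [CovariantClass E E (· + ·) (· ≤ ·)] [PosSMulMono ℝ E]
variable [ConditionallyCompleteLattice G] [AddCommGroup G] [Module ℝ G]
  [CovariantClass G G (· + ·) (· ≤ ·)] [PosSMulMono ℝ G]

lemma aux_smul_le_smul {c c' : ℝ} {x : E} (h : c ≤ c') (hx : 0 ≤ x) :
    c • x ≤ c' • x := by
  have h1 : 0 ≤ (c' - c) • x := smul_nonneg (sub_nonneg.mpr h) hx
  rw [sub_smul] at h1
  exact sub_nonneg.mp h1

/-- The dyadic cut `(f - k 2⁻ⁿ h)⁺`. -/
def fgn (f h : E) (n k : ℕ) : E := (f - ((k : ℝ) * (1 / 2) ^ n) • h) ⊔ 0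

/-- The band projection of `e` onto the band generated by the dyadic cut. -/
def fP (C : CRT E G) (f h : E) (n k : ℕ) : E := projP (fgn f h n k) C.e

/-- Difference of consecutive projections. -/
def fQ (C : CRT E G) (f h : E) (n k : ℕ) : E := fP C f h n k - fP C f h n (k + 1)

/-- The `n`-th dyadic step approximation of `f`. -/
def fS (C : CRT E G) (f h : E) (n : ℕ) : E :=
  ∑ k ∈ Finset.range (2 ^ n), C.sm (((k : ℝ) * (1 / 2) ^ n) • h) (fQ C f h n k)

variable (C : CRT E G)
variable {f h : E}

lemma fgn_nonneg (n k : ℕ) : 0 ≤ fgn f h n k := le_sup_right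

lemma fgn_anti (hh0 : 0 ≤ h) {n k l : ℕ} (hkl : k ≤ l) : fgn f h n l ≤ fgn f h n k := by
  refine sup_le_sup_right (sub_le_sub_left ?_ f) 0
  refine aux_smul_le_smul ?_ hh0
  exact mul_le_mul_of_nonneg_right (Nat.cast_le.mpr hkl) (by positivity)

lemma fgn_zero (hf0 : 0 ≤ f) (n : ℕ) : fgn f h n 0 = f := by
  rw [fgn, Nat.cast_zero, zero_mul, zero_smul, sub_zero]
  exact sup_eq_left.mpr hf0

lemma fgn_top (hfh : f ≤ h) (n : ℕ) : fgn f h n (2 ^ n) = 0 := by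
  rw [fgn]
  have h1 : ((2 ^ n : ℕ) : ℝ) * (1 / 2) ^ n = 1 := by
    push_cast
    rw [one_div, inv_pow, mul_inv_cancel₀ (pow_ne_zero n two_ne_zero)]
  rw [h1, one_smul]
  exact sup_eq_right.mpr (sub_nonpos.mpr hfh)

lemma fP_comp (n k : ℕ) : fP C f h n k ∈ Comp C.e :=
  projP_comp C.e_nonneg (fgn_nonneg n k)

lemma fP_nonneg (n k : ℕ) : 0 ≤ fP C f h n k := comp_nonneg (fP_comp C n k)

lemma fP_le_e (n k : ℕ) : fP C f h n k ≤ C.e := comp_le (fP_comp C n k)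

lemma fP_anti (hh0 : 0 ≤ h) {n k l : ℕ} (hkl : k ≤ l) :
    fP C f h n l ≤ fP C f h n k := by
  refine projP_mono_left C.e_nonneg ?_
  rw [abs_of_nonneg (fgn_nonneg (f := f) (h := h) n l),
    abs_of_nonneg (fgn_nonneg (f := f) (h := h) n k)]
  exact fgn_anti hh0 hkl

lemma fP_top (hfh : f ≤ h) (n : ℕ) : fP C f h n (2 ^ n) = 0 := by
  rw [fP, fgn_top hfh]
  exact projP_zero C.e_nonneg

lemma fP_double (n k : ℕ) : fP C f h (n + 1) (2 * k) = fP C f h n k := by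
  have h1 : ((2 * k : ℕ) : ℝ) * (1 / 2) ^ (n + 1) = (k : ℝ) * (1 / 2) ^ n := by
    push_cast
    ring
  rw [fP, fP, fgn, fgn, h1]

lemma fQ_comp (hh0 : 0 ≤ h) (n k : ℕ) : fQ C f h n k ∈ Comp C.e :=
  comp_sub (fP_comp C n k) (fP_comp C n (k + 1)) (fP_anti C hh0 (Nat.le_succ k))

lemma fQ_nonneg (hh0 : 0 ≤ h) (n k : ℕ) : 0 ≤ fQ C f h n k :=
  comp_nonneg (fQ_comp C hh0 n k)

lemma fQ_le_fP (n k : ℕ) : fQ C f h n k ≤ fP C f h n k :=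
  sub_le_self _ (fP_nonneg C n (k + 1))

lemma fQ_le_compl (n k : ℕ) : fQ C f h n k ≤ C.e - fP C f h n (k + 1) :=
  sub_le_sub_right (fP_le_e C n k) _

lemma fQ_disj_fP (hh0 : 0 ≤ h) (n k : ℕ) : fQ C f h n k ⊓ fP C f h n (k + 1) = 0 :=
  comp_sub_disj (fP_comp C n k) (fP_comp C n (k + 1)) (fP_anti C hh0 (Nat.le_succ k))

lemma fQ_disj (hh0 : 0 ≤ h) {n k l : ℕ} (hkl : k < l) :
    fQ C f h n k ⊓ fQ C f h n l = 0 := by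
  refine le_antisymm ?_ (le_inf (fQ_nonneg C hh0 n k) (fQ_nonneg C hh0 n l))
  calc fQ C f h n k ⊓ fQ C f h n l ≤ fQ C f h n k ⊓ fP C f h n (k + 1) := by
        refine inf_le_inf_left _ ((fQ_le_fP C n l).trans (fP_anti C hh0 hkl))
    _ = 0 := fQ_disj_fP C hh0 n k

lemma fQ_pairwise (hh0 : 0 ≤ h) (n : ℕ) {k l : ℕ} (hkl : k ≠ l) :
    fQ C f h n k ⊓ fQ C f h n l = 0 := by
  rcases hkl.lt_or_gt with hlt | hlt
  · exact fQ_disj C hh0 hlt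
  · rw [inf_comm]; exact fQ_disj C hh0 hlt

lemma fQ_sum (hfh : f ≤ h) (n : ℕ) :
    ∑ k ∈ Finset.range (2 ^ n), fQ C f h n k = fP C f h n 0 := by
  rw [show (∑ k ∈ Finset.range (2 ^ n), fQ C f h n k)
      = ∑ k ∈ Finset.range (2 ^ n), (fP C f h n k - fP C f h n (k + 1)) from rfl,
    Finset.sum_range_sub' (fun k => fP C f h n k), fP_top C hfh, sub_zero]

end CRTFreud

section CRTFreud2

variable {E : Type u} {G : Type v}
variable [ConditionallyCompleteLattice E] [AddCommGroup E] [Module ℝ E]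
  [CovariantClass E E (· + ·) (· ≤ ·)] [PosSMulMono ℝ E]
variable [ConditionallyCompleteLattice G] [AddCommGroup G] [Module ℝ G]
  [CovariantClass G G (· + ·) (· ≤ ·)] [PosSMulMono ℝ G]
variable (C : CRT E G)
variable {f h : E}

lemma fS_nonneg (hh0 : 0 ≤ h) (hhR : h ∈ C.R) (n : ℕ) : 0 ≤ fS C f h n := by
  refine aux_sum_nonneg _ _ fun k _ => ?_
  refine C.sm_nonneg (C.Linf_smul (C.R_Linf hhR) _) ?_ (fQ_nonneg C hh0 n k)
  exact smul_nonneg (by positivity) hh0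

lemma fQ_disj_compl (hh0 : 0 ≤ h) (n k : ℕ) :
    fQ C f h n k ⊓ (C.e - fP C f h n 0) = 0 := by
  refine le_antisymm ?_ (le_inf (fQ_nonneg C hh0 n k)
    (comp_nonneg (comp_compl (fP_comp C n 0))))
  calc fQ C f h n k ⊓ (C.e - fP C f h n 0)
      ≤ fP C f h n 0 ⊓ (C.e - fP C f h n 0) :=
        inf_le_inf_right _ ((fQ_le_fP C n _).trans (fP_anti C hh0 (Nat.zero_le _)))
    _ = 0 := fP_comp C n 0

lemma fS_steps (hf0 : 0 ≤ f) (hfh : f ≤ h) (hh0 : 0 ≤ h) (hhR : h ∈ C.R) (n : ℕ) :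
    fS C f h n ∈ C.Steps := by
  classical
  set N := 2 ^ n with hN
  refine ⟨N + 1,
    (fun i : Fin (N + 1) => if ((i : ℕ) < N) then ((((i : ℕ) : ℝ) * (1 / 2) ^ n) • h) else 0),
    (fun i : Fin (N + 1) => if ((i : ℕ) < N) then fQ C f h n (i : ℕ) else C.e - fP C f h n 0),
    ?_, ?_, ?_, ?_, ?_⟩
  · intro i
    dsimp only
    by_cases hi : (i : ℕ) < N
    · rw [if_pos hi]
      exact C.R_smul hhR _
    · rw [if_neg hi]
      exact C.R_zero
  · intro i
    dsimp only
    by_cases hi : (i : ℕ) < N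
    · rw [if_pos hi]
      exact fQ_comp C hh0 n _
    · rw [if_neg hi]
      exact comp_compl (fP_comp C n 0)
  · intro i k hik
    dsimp only
    by_cases hi : (i : ℕ) < N <;> by_cases hk : (k : ℕ) < N
    · rw [if_pos hi, if_pos hk]
      exact fQ_pairwise C hh0 n fun hv => hik (Fin.ext hv)
    · rw [if_pos hi, if_neg hk]
      exact fQ_disj_compl C hh0 n _
    · rw [if_neg hi, if_pos hk]
      rw [inf_comm]
      exact fQ_disj_compl C hh0 n _
    · exfalso
      have hi' : (i : ℕ) = N := Nat.le_antisymm (Nat.lt_succ_iff.mp i.isLt) (Nat.le_of_not_lt hi)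
      have hk' : (k : ℕ) = N := Nat.le_antisymm (Nat.lt_succ_iff.mp k.isLt) (Nat.le_of_not_lt hk)
      exact hik (Fin.ext (hi'.trans hk'.symm))
  · rw [Fin.sum_univ_castSucc]
    simp only [Fin.val_last, Fin.coe_castSucc]
    rw [if_neg (lt_irrefl N)]
    rw [Finset.sum_congr rfl fun (i : Fin N) (_ : i ∈ Finset.univ) =>
      if_pos (i.isLt : (i : ℕ) < N)]
    rw [Fin.sum_univ_eq_sum_range (fun k => fQ C f h n k) N, fQ_sum C hfh n]
    abel
  · rw [Fin.sum_univ_castSucc]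
    simp only [Fin.val_last, Fin.coe_castSucc]
    rw [if_neg (lt_irrefl N), if_neg (lt_irrefl N), C.sm_zero_left, add_zero]
    have h1 : ∀ i : Fin N, C.sm (if (i : ℕ) < N then ((((i : ℕ) : ℝ) * (1 / 2) ^ n) • h) else 0)
        (if (i : ℕ) < N then fQ C f h n (i : ℕ) else C.e - fP C f h n 0)
        = C.sm ((((i : ℕ) : ℝ) * (1 / 2) ^ n) • h) (fQ C f h n (i : ℕ)) := by
      intro i
      rw [if_pos (i.isLt : (i : ℕ) < N), if_pos (i.isLt : (i : ℕ) < N)]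
    rw [Finset.sum_congr rfl fun (i : Fin N) (_ : i ∈ Finset.univ) => h1 i]
    rw [Fin.sum_univ_eq_sum_range (fun k => C.sm ((((k : ℕ) : ℝ) * (1 / 2) ^ n) • h)
      (fQ C f h n k)) N]
    rfl

lemma fS_bounds (hf0 : 0 ≤ f) (hfh : f ≤ h) (hh0 : 0 ≤ h) (hhR : h ∈ C.R) (n : ℕ) :
    0 ≤ f - fS C f h n ∧ f - fS C f h n ≤ ((1 / 2 : ℝ) ^ n) • h := by
  set N := 2 ^ n with hN
  set c0 : ℝ := (1 / 2 : ℝ) ^ n with hc0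
  have hc00 : (0 : ℝ) ≤ c0 := by positivity
  have hhL : h ∈ C.Linf := C.R_Linf hhR
  have hjh0 : (0 : G) ≤ C.j h := C.j_nonneg.mpr hh0
  have hjQ0 : ∀ k, (0 : G) ≤ C.j (fQ C f h n k) :=
    fun k => C.j_nonneg.mpr (fQ_nonneg C hh0 n k)
  have hef : C.j C.e = (∑ k ∈ Finset.range N, C.j (fQ C f h n k)) + C.j (C.e - fP C f h n 0) := by
    rw [← map_sum, ← map_add]
    congr 1
    rw [fQ_sum C hfh n]
    abel
  have hjf : C.j f = (∑ k ∈ Finset.range N, C.mul (C.j f) (C.j (fQ C f h n k)))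
      + C.mul (C.j f) (C.j (C.e - fP C f h n 0)) := by
    calc C.j f = C.mul (C.j f) (C.j C.e) := (C.gm_one_right _).symm
      _ = _ := by rw [hef, C.gm_add_right, C.gm_sum_right]
  have hlast : C.mul (C.j f) (C.j (C.e - fP C f h n 0)) = 0 := by
    have h2 : f ⊓ (C.e - fP C f h n 0) = 0 := by
      have h1 := projP_compl_disj C.e_nonneg (fgn_nonneg (f := f) (h := h) n 0)
      rw [fgn_zero hf0 n] at h1
      rw [fP, fgn_zero hf0 n]
      exact h1
    refine C.gm_disj (C.j_nonneg.mpr hf0)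
      (C.j_nonneg.mpr (comp_nonneg (comp_compl (fP_comp C n 0)))) ?_
    rw [← C.j_inf, h2, map_zero]
  have hjS : C.j (fS C f h n) = ∑ k ∈ Finset.range N,
      ((k : ℝ) * c0) • C.mul (C.j h) (C.j (fQ C f h n k)) := by
    rw [fS, map_sum]
    refine Finset.sum_congr rfl fun k _ => ?_
    rw [C.j_sm (C.Linf_smul hhL _), map_smul, C.gm_smul_left]
  set D : ℕ → G := fun k => C.mul (C.j (f - ((k : ℝ) * c0) • h)) (C.j (fQ C f h n k)) with hD
  have hDeq : ∀ k, D k = C.mul (C.j f) (C.j (fQ C f h n k))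
      - ((k : ℝ) * c0) • C.mul (C.j h) (C.j (fQ C f h n k)) := by
    intro k
    show C.mul (C.j (f - ((k : ℝ) * c0) • h)) (C.j (fQ C f h n k)) = _
    rw [map_sub, C.gm_sub_left, map_smul, C.gm_smul_left]
  have hD0 : ∀ k, 0 ≤ D k := by
    intro k
    set x := f - ((k : ℝ) * c0) • h with hx
    have hgx : fgn f h n k = x ⊔ 0 := rfl
    set m := (-x) ⊔ 0 with hm
    have hxd : x = fgn f h n k - m := by
      rw [hgx, hm]
      exact (posPart_sub_negPart x).symm
    have hdisj : m ⊓ fgn f h n k = 0 := by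
      rw [hgx, hm, inf_comm]
      exact posPart_inf_negPart_eq_zero x
    have hm0 : 0 ≤ m := le_sup_right
    have hmQ : m ⊓ fQ C f h n k = 0 := by
      have hmP : m ⊓ fP C f h n k = 0 := by
        refine projP_disj C.e_nonneg hm0 ?_
        rw [abs_of_nonneg (fgn_nonneg (f := f) (h := h) n k)]
        exact hdisj
      refine le_antisymm ?_ (le_inf hm0 (fQ_nonneg C hh0 n k))
      calc m ⊓ fQ C f h n k ≤ m ⊓ fP C f h n k := inf_le_inf_left m (fQ_le_fP C n k)
        _ = 0 := hmP
    have hmmul : C.mul (C.j m) (C.j (fQ C f h n k)) = 0 := by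
      refine C.gm_disj (C.j_nonneg.mpr hm0) (hjQ0 k) ?_
      rw [← C.j_inf, hmQ, map_zero]
    have hDk : D k = C.mul (C.j (fgn f h n k)) (C.j (fQ C f h n k)) := by
      show C.mul (C.j x) (C.j (fQ C f h n k)) = _
      rw [hxd, map_sub, C.gm_sub_left, hmmul, sub_zero]
    rw [hDk]
    exact C.gm_nonneg (C.j_nonneg.mpr (fgn_nonneg n k)) (hjQ0 k)
  have hDle : ∀ k, D k ≤ c0 • C.mul (C.j h) (C.j (fQ C f h n k)) := by
    intro k
    set x' := f - (((k + 1 : ℕ) : ℝ) * c0) • h with hx'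
    have hgx' : fgn f h n (k + 1) = x' ⊔ 0 := rfl
    set m' := (-x') ⊔ 0 with hm'
    have hxd' : x' = fgn f h n (k + 1) - m' := by
      rw [hgx', hm']
      exact (posPart_sub_negPart x').symm
    have hg'Q : fgn f h n (k + 1) ⊓ fQ C f h n k = 0 := by
      have h1 : fgn f h n (k + 1) ⊓ (C.e - fP C f h n (k + 1)) = 0 :=
        projP_compl_disj C.e_nonneg (fgn_nonneg n (k + 1))
      refine le_antisymm ?_ (le_inf (fgn_nonneg n (k + 1)) (fQ_nonneg C hh0 n k))
      calc fgn f h n (k + 1) ⊓ fQ C f h n k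
          ≤ fgn f h n (k + 1) ⊓ (C.e - fP C f h n (k + 1)) :=
            inf_le_inf_left _ (fQ_le_compl C n k)
        _ = 0 := h1
    have hg'mul : C.mul (C.j (fgn f h n (k + 1))) (C.j (fQ C f h n k)) = 0 := by
      refine C.gm_disj (C.j_nonneg.mpr (fgn_nonneg n (k + 1))) (hjQ0 k) ?_
      rw [← C.j_inf, hg'Q, map_zero]
    have hneg : C.mul (C.j x') (C.j (fQ C f h n k)) ≤ 0 := by
      rw [hxd', map_sub, C.gm_sub_left, hg'mul, zero_sub]
      exact neg_nonpos.mpr (C.gm_nonneg (C.j_nonneg.mpr le_sup_right) (hjQ0 k))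
    have harith : C.j x' = C.j (f - ((k : ℝ) * c0) • h) - c0 • C.j h := by
      have h5 : x' = f - ((k : ℝ) * c0) • h - c0 • h := by
        rw [hx']
        have h6 : (((k + 1 : ℕ) : ℝ) * c0) = (k : ℝ) * c0 + c0 := by push_cast; ring
        rw [h6, add_smul]
        abel
      rw [h5, map_sub, map_sub, map_smul, map_smul]
    have hsub : C.mul (C.j x') (C.j (fQ C f h n k))
        = D k - c0 • C.mul (C.j h) (C.j (fQ C f h n k)) := by
      rw [harith, C.gm_sub_left]
      have h7 : C.mul (c0 • C.j h) (C.j (fQ C f h n k))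
          = c0 • C.mul (C.j h) (C.j (fQ C f h n k)) := C.gm_smul_left _ _ _
      rw [h7]
    rw [hsub] at hneg
    exact sub_nonpos.mp hneg
  have hdiff : C.j (f - fS C f h n) = ∑ k ∈ Finset.range N, D k := by
    rw [map_sub, hjf, hjS, hlast, add_zero, ← Finset.sum_sub_distrib]
    exact Finset.sum_congr rfl fun k _ => (hDeq k).symm
  have hlow : (0 : G) ≤ C.j (f - fS C f h n) := by
    rw [hdiff]
    exact aux_sum_nonneg _ _ fun k _ => hD0 k
  have hhigh : C.j (f - fS C f h n) ≤ C.j (c0 • h) := by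
    rw [hdiff]
    calc ∑ k ∈ Finset.range N, D k
        ≤ ∑ k ∈ Finset.range N, c0 • C.mul (C.j h) (C.j (fQ C f h n k)) :=
          aux_sum_le_sum _ _ _ fun k _ => hDle k
      _ = c0 • ∑ k ∈ Finset.range N, C.mul (C.j h) (C.j (fQ C f h n k)) :=
          (Finset.smul_sum).symm
      _ = c0 • C.mul (C.j h) (∑ k ∈ Finset.range N, C.j (fQ C f h n k)) := by
          rw [C.gm_sum_right]
      _ = c0 • C.mul (C.j h) (C.j (fP C f h n 0)) := by
          rw [← map_sum, fQ_sum C hfh n]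
      _ ≤ c0 • C.mul (C.j h) (C.j C.e) := by
          refine smul_le_smul_of_nonneg_left ?_ hc00
          exact C.gm_mono_right (C.j_le_iff.mpr (fP_le_e C n 0)) hjh0
      _ = C.j (c0 • h) := by rw [C.gm_one_right, map_smul]
  exact ⟨C.j_nonneg.mp hlow, C.j_le_iff.mp hhigh⟩

lemma fS_formula (hfh : f ≤ h) (hh0 : 0 ≤ h) (hhR : h ∈ C.R) (n : ℕ) :
    fS C f h n = ((1 / 2 : ℝ) ^ n) • ∑ k ∈ Finset.range (2 ^ n),
      C.sm h (fP C f h n (k + 1)) := by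
  have hhL : h ∈ C.Linf := C.R_Linf hhR
  set t : ℕ → E := fun k => C.sm h (fP C f h n k) with ht
  have h1 : fS C f h n = ∑ k ∈ Finset.range (2 ^ n),
      ((1 / 2 : ℝ) ^ n) • (k • C.sm h (fQ C f h n k)) := by
    rw [fS]
    refine Finset.sum_congr rfl fun k _ => ?_
    rw [C.sm_smul_left hhL, mul_comm, mul_smul, Nat.cast_smul_eq_nsmul]
  have h2 : ∀ k, C.sm h (fQ C f h n k) = t k - t (k + 1) := by
    intro k
    exact C.sm_sub_right hhL _ _
  have h3 : t (2 ^ n) = 0 := by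
    show C.sm h (fP C f h n (2 ^ n)) = 0
    rw [fP_top C hfh n, C.sm_zero_right hhL]
  calc fS C f h n = ((1 / 2 : ℝ) ^ n) • ∑ k ∈ Finset.range (2 ^ n),
        k • (t k - t (k + 1)) := by
        rw [h1, ← Finset.smul_sum]
        congr 1
        exact Finset.sum_congr rfl fun k _ => by rw [h2]
    _ = ((1 / 2 : ℝ) ^ n) • ((∑ k ∈ Finset.range (2 ^ n), t (k + 1))
        - (2 ^ n) • t (2 ^ n)) := by rw [aux_abel]
    _ = _ := by rw [h3, smul_zero, sub_zero]

lemma fS_mono (hfh : f ≤ h) (hh0 : 0 ≤ h) (hhR : h ∈ C.R) (n : ℕ) :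
    fS C f h n ≤ fS C f h (n + 1) := by
  have hhL : h ∈ C.Linf := C.R_Linf hhR
  set t : ℕ → E := fun k => C.sm h (fP C f h n k) with ht
  set t' : ℕ → E := fun k => C.sm h (fP C f h (n + 1) k) with ht'
  have hdouble : ∀ k, t' (2 * k) = t k := by
    intro k
    show C.sm h (fP C f h (n + 1) (2 * k)) = C.sm h (fP C f h n k)
    rw [fP_double]
  have hanti : ∀ {a b : ℕ}, a ≤ b → t' b ≤ t' a := by
    intro a b hab
    exact C.sm_mono_right hhL hh0 (fP_anti C hh0 hab)
  have hsplit : ∑ k ∈ Finset.range (2 ^ (n + 1)), t' (k + 1)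
      = ∑ k ∈ Finset.range (2 ^ n), (t' (2 * k + 1) + t' (2 * k + 1 + 1)) := by
    have h2 : 2 ^ (n + 1) = 2 * 2 ^ n := by rw [pow_succ, mul_comm]
    rw [h2, aux_sum_two_mul (fun i => t' (i + 1)) (2 ^ n)]
  have e1 : ∀ k, t' (2 * k + 1 + 1) = t (k + 1) := by
    intro k
    have h4 : 2 * k + 1 + 1 = 2 * (k + 1) := by ring
    rw [h4, hdouble]
  have hsum_le : ∑ k ∈ Finset.range (2 ^ n), (t (k + 1) + t (k + 1))
      ≤ ∑ k ∈ Finset.range (2 ^ n), (t' (2 * k + 1) + t' (2 * k + 1 + 1)) := by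
    refine aux_sum_le_sum _ _ _ fun k _ => ?_
    refine add_le_add ?_ (e1 k).symm.le
    rw [← e1 k]
    exact hanti (Nat.le_succ _)
  have hc1 : (0 : ℝ) ≤ (1 / 2 : ℝ) ^ (n + 1) := by positivity
  calc fS C f h n = ((1 / 2 : ℝ) ^ n) • ∑ k ∈ Finset.range (2 ^ n), t (k + 1) :=
        fS_formula C hfh hh0 hhR n
    _ = ((1 / 2 : ℝ) ^ (n + 1)) • ∑ k ∈ Finset.range (2 ^ n), (t (k + 1) + t (k + 1)) := by
        rw [Finset.sum_add_distrib]
        have harith : ((1 / 2 : ℝ) ^ n) = ((1 / 2 : ℝ) ^ (n + 1)) * 2 := by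
          rw [pow_succ]; ring
        rw [harith, mul_smul, two_smul]
    _ ≤ ((1 / 2 : ℝ) ^ (n + 1)) • ∑ k ∈ Finset.range (2 ^ n),
          (t' (2 * k + 1) + t' (2 * k + 1 + 1)) := smul_le_smul_of_nonneg_left hsum_le hc1
    _ = ((1 / 2 : ℝ) ^ (n + 1)) • ∑ k ∈ Finset.range (2 ^ (n + 1)), t' (k + 1) := by
        rw [hsplit]
    _ = fS C f h (n + 1) := (fS_formula C hfh hh0 hhR (n + 1)).symm

end CRTFreud2

/-- Let `(E,e,T)` be a `T`-universally complete conditional Riesz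
triple and `μ ∈ ba(T)₊`.  Then (a) for every `f ∈ L^∞(T)₊` and every sequence `(sₙ)`
of positive step functions converging `u`-uniformly to `f` (`u ∈ R(T)₊`), the
sequence `(I_μ(sₙ))` converges `(u·μ(e))`-uniformly to `∫ f dμ`; and (b) for every
`f ∈ L^∞(T)₊` there exist `u ∈ R(T)₊` and an increasing sequence of positive step
functions converging `u`-uniformly to `f`. -/
theorem integral_approximation_by_steps {E : Type u} {G : Type v}
    [ConditionallyCompleteLattice E] [AddCommGroup E] [Module ℝ E]
    [CovariantClass E E (· + ·) (· ≤ ·)] [PosSMulMono ℝ E]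
    [ConditionallyCompleteLattice G] [AddCommGroup G] [Module ℝ G]
    [CovariantClass G G (· + ·) (· ≤ ·)] [PosSMulMono ℝ G]
    (C : CRT E G) (μ : E → E) (hμ : μ ∈ C.baT)
    (hpos : ∀ p ∈ Comp C.e, 0 ≤ μ p) :
    -- (a)
    (∀ f ∈ C.Linf, 0 ≤ f → ∀ u ∈ C.R, 0 ≤ u →
      ∀ s : ℕ → E, (∀ n, s n ∈ C.Steps ∧ 0 ≤ s n) → UnifConv u s f →
        UnifConv (C.sm u (μ C.e)) (fun n => C.Imu μ (s n)) (C.intPos μ f)) ∧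
    -- (b)
    (∀ f ∈ C.Linf, 0 ≤ f → ∃ u ∈ C.R, 0 ≤ u ∧
      ∃ s : ℕ → E, (∀ n, s n ∈ C.Steps ∧ 0 ≤ s n) ∧ Monotone s ∧ UnifConv u s f) := by
  obtain ⟨⟨hchg, hμR, hbdd0⟩, hband⟩ := hμ
  constructor
  · -- part (a)
    intro f hf hf0 u huR hu0 s hs hconv
    obtain ⟨ε, hεa, hεt, hεb⟩ := hconv
    have hε0 : ∀ n, 0 ≤ ε n := by
      intro n
      refine le_of_tendsto hεt ?_
      filter_upwards [Filter.eventually_ge_atTop n] with m hm using hεa hm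
    set W := C.sm u (μ C.e) with hW
    have key_le : ∀ g t : E, g ∈ C.Steps → t ∈ C.Steps → ∀ c : ℝ, 0 ≤ c →
        g ≤ t + c • u → C.Imu μ g ≤ C.Imu μ t + c • W := by
      intro g t hg ht c hc hle
      obtain ⟨m, β, q, hrep⟩ := ht
      have ha : c • u ∈ C.R := C.R_smul huR c
      have h1 : C.Imu μ (t + c • u) = C.Imu μ t + C.sm (c • u) (μ C.e) :=
        C.Imu_add_R μ hband hpos hchg hrep ha
      have h2 : C.sm (c • u) (μ C.e) = c • W := by
        rw [hW, C.sm_smul_left (C.R_Linf huR)]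
      have h3 : C.Imu μ g ≤ C.Imu μ (t + c • u) :=
        C.Imu_mono μ hband hpos hchg hg ⟨m, _, _, C.rep_add_R hrep ha⟩ hle
      rw [h1, h2] at h3
      exact h3
    set S := {v | ∃ g ∈ C.Steps, 0 ≤ g ∧ g ≤ f ∧ v = C.Imu μ g} with hS
    have hint : C.intPos μ f = sSup S := rfl
    have hSne : S.Nonempty := ⟨C.Imu μ 0, 0, C.steps_zero, le_rfl, hf0, rfl⟩
    have hfs : ∀ n, f ≤ s n + ε n • u := by
      intro n
      have h4 := (le_abs_self (f - s n)).trans (hεb n)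
      rw [add_comm]
      exact sub_le_iff_le_add.mp h4
    have hsf : ∀ n, s n - ε n • u ≤ f := by
      intro n
      have h4 := (neg_le_abs (f - s n)).trans (hεb n)
      rw [neg_sub] at h4
      exact sub_le_comm.mp h4
    have hbddS : BddAbove S := by
      refine ⟨C.Imu μ (s 0) + ε 0 • W, ?_⟩
      rintro v ⟨g, hg, hg0, hgf, rfl⟩
      exact key_le g (s 0) hg (hs 0).1 (ε 0) (hε0 0) (hgf.trans (hfs 0))
    refine ⟨ε, hεa, hεt, fun n => ?_⟩
    have hub : C.intPos μ f - C.Imu μ (s n) ≤ ε n • W := by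
      rw [hint, sub_le_iff_le_add]
      refine csSup_le hSne ?_
      rintro v ⟨g, hg, hg0, hgf, rfl⟩
      rw [add_comm]
      exact key_le g (s n) hg (hs n).1 (ε n) (hε0 n) (hgf.trans (hfs n))
    have hlb : C.Imu μ (s n) - C.intPos μ f ≤ ε n • W := by
      obtain ⟨m, β, q, hrep⟩ := (hs n).1
      have ha : ε n • u ∈ C.R := C.R_smul huR (ε n)
      have hrep2 : C.IsStdRep (s n + -(ε n • u)) m (fun i => β i + -(ε n • u)) q :=
        C.rep_add_R hrep (C.R_neg ha)
      rw [← sub_eq_add_neg] at hrep2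
      have hg'rep := C.rep_posPart hrep2
      have hg'S : (s n - ε n • u) ⊔ 0 ∈ C.Steps := ⟨m, _, _, hg'rep⟩
      have hg'0 : (0 : E) ≤ (s n - ε n • u) ⊔ 0 := le_sup_right
      have hg'f : (s n - ε n • u) ⊔ 0 ≤ f := sup_le (hsf n) hf0
      have h5 : C.Imu μ ((s n - ε n • u) ⊔ 0) ≤ C.intPos μ f := by
        rw [hint]
        exact le_csSup hbddS ⟨_, hg'S, hg'0, hg'f, rfl⟩
      have h6 : s n ≤ ((s n - ε n • u) ⊔ 0) + ε n • u :=
        sub_le_iff_le_add.mp (le_sup_left : s n - ε n • u ≤ (s n - ε n • u) ⊔ 0)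
      have h7 := key_le (s n) _ (hs n).1 hg'S (ε n) (hε0 n) h6
      have h8 := h7.trans (add_le_add_left h5 _)
      rw [add_comm] at h8
      exact sub_le_iff_le_add.mpr h8
    show |C.intPos μ f - C.Imu μ (s n)| ≤ ε n • W
    show (C.intPos μ f - C.Imu μ (s n)) ⊔ -(C.intPos μ f - C.Imu μ (s n)) ≤ ε n • W
    refine sup_le hub ?_
    rw [neg_sub]
    exact hlb
  · -- part (b)
    intro f hf hf0
    obtain ⟨h, hhR, hh0, hfh⟩ := hf
    have hfh' : f ≤ h := (le_abs_self f).trans hfh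
    refine ⟨h, hhR, hh0, fun n => fS C f h n, fun n =>
      ⟨fS_steps C hf0 hfh' hh0 hhR n, fS_nonneg C hh0 hhR n⟩,
      monotone_nat_of_le_succ fun n => fS_mono C hfh' hh0 hhR n,
      fun n => (1 / 2 : ℝ) ^ n, ?_, ?_, fun n => ?_⟩
    · intro a b hab
      exact pow_le_pow_of_le_one (by norm_num) (by norm_num) hab
    · exact tendsto_pow_atTop_nhds_zero_of_lt_one (by norm_num) (by norm_num)
    · obtain ⟨h1, h2⟩ := fS_bounds C hf0 hfh' hh0 hhR n
      show |f - fS C f h n| ≤ ((1 / 2 : ℝ) ^ n) • h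
      rw [abs_of_nonneg h1]
      exact h2


end RieszPaper

end
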